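/- arXiv:2109.08971 — 7 statements merged into one kernel-verified Lean document; each statement's English description precedes it below -/
import Mathlib

section
/- Let X and Y be independent real-valued random variables, each supported on an interval, such that both P[X > Y] > 0 and P[Y > X] > 0. Then E[X | X > Y] > E[X]. -/
open MeasureTheory ProbabilityTheory

noncomputable def condExpEvent {Ω : Type*} [MeasurableSpace Ω] (μ : Measure Ω)
    (X : Ω → ℝ) (A : Set Ω) : ℝ :=
  (μ A).toReal⁻¹ * ∫ ω in A, X ω ∂μ

def IntervalSupport {Ω : Type*} [MeasurableSpace Ω] (μ : Measure Ω)
    (X : Ω → ℝ) (a b : ℝ) : Prop :=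
  a < b ∧ μ {ω | X ω ∈ Set.Icc a b} = 1 ∧
    ∀ c d : ℝ, a ≤ c → c < d → d ≤ b → 0 < μ {ω | X ω ∈ Set.Ioo c d}

noncomputable def resProb {Ω : Type*} [MeasurableSpace Ω] (μ : Measure Ω) {n : ℕ}
    (u : Fin n → Ω → ℝ) (β : Fin n → ℝ) (i : Fin n) : ENNReal :=
  μ {ω | β i * u i ω = ⨆ j, β j * u j ω}

def PDFBoundedAbove {Ω : Type*} [MeasurableSpace Ω] (μ : Measure Ω)
    (X : Ω → ℝ) (q : ℝ) : Prop :=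
  ∀ a b : ℝ, a ≤ b → μ {ω | X ω ∈ Set.Ioc a b} ≤ ENNReal.ofReal (q * (b - a))

def PDFBoundedBelowOn {Ω : Type*} [MeasurableSpace Ω] (μ : Measure Ω)
    (X : Ω → ℝ) (p a b : ℝ) : Prop :=
  ∀ c d : ℝ, a ≤ c → c ≤ d → d ≤ b → ENNReal.ofReal (p * (d - c)) ≤ μ {ω | X ω ∈ Set.Ioc c d}


lemma my_cheb (ν ρ : Measure ℝ) [IsProbabilityMeasure ν] [IsProbabilityMeasure ρ]
    (aX bX aY bY : ℝ)
    (hbound : ∀ᵐ x ∂ν, x ∈ Set.Icc 0 1)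
    (hνpos : ∀ c d : ℝ, aX ≤ c → c < d → d ≤ bX → 0 < ν (Set.Ioo c d))
    (hρpos : ∀ c d : ℝ, aY ≤ c → c < d → d ≤ bY → 0 < ρ (Set.Ioo c d))
    (haXbX : aX < bX) (haYbY : aY < bY) (hov1 : aY < bX) (hov2 : aX < bY) :
    (∫ x, (ρ (Set.Iio x)).toReal ∂ν) * (∫ x, x ∂ν)
      < ∫ x, x * (ρ (Set.Iio x)).toReal ∂ν := by
  set F : ℝ → ℝ := fun x => (ρ (Set.Iio x)).toReal with hF
  have hFmono : Monotone F := fun a b hab =>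
    ENNReal.toReal_mono (measure_ne_top _ _) (measure_mono (Set.Iio_subset_Iio hab))
  have hFmeas : Measurable F := hFmono.measurable
  have hF0 : ∀ x, 0 ≤ F x := fun x => ENNReal.toReal_nonneg
  have hF1 : ∀ x, F x ≤ 1 := by
    intro x
    have : ρ (Set.Iio x) ≤ 1 := prob_le_one
    calc F x ≤ (1 : ENNReal).toReal := ENNReal.toReal_mono (by simp) this
      _ = 1 := by simp
  have habs : ∀ᵐ x ∂ν, |x| ≤ 1 := by
    filter_upwards [hbound] with x hx
    rw [abs_le]; constructor <;> [linarith [hx.1]; exact hx.2]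
  have hint_id : Integrable (fun x : ℝ => x) ν := by
    refine Integrable.mono' (integrable_const 1) measurable_id.aestronglyMeasurable ?_
    filter_upwards [habs] with x hx using hx
  have hint_F : Integrable F ν := by
    refine Integrable.mono' (integrable_const 1) hFmeas.aestronglyMeasurable ?_
    exact Filter.Eventually.of_forall fun x => by
      rw [Real.norm_eq_abs, abs_of_nonneg (hF0 x)]; exact hF1 x
  have hint_xF : Integrable (fun x => x * F x) ν := by
    refine Integrable.mono' (integrable_const 1)
      (measurable_id.mul hFmeas).aestronglyMeasurable ?_
    filter_upwards [habs] with x hx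
    rw [Real.norm_eq_abs, abs_mul, abs_of_nonneg (hF0 x)]
    calc |x| * F x ≤ 1 * 1 := mul_le_mul hx (hF1 x) (hF0 x) zero_le_one
      _ = 1 := by ring
  set π2 : Measure (ℝ × ℝ) := ν.prod ν with hπ2
  set h : ℝ × ℝ → ℝ := fun p => (p.1 - p.2) * (F p.1 - F p.2) with hh
  -- integrable pieces
  have hone : Integrable (fun x : ℝ => (1:ℝ)) ν := integrable_const 1
  have ht1 : Integrable (fun p : ℝ × ℝ => (p.1 * F p.1) * 1) π2 := hint_xF.mul_prod hone
  have ht2 : Integrable (fun p : ℝ × ℝ => p.1 * F p.2) π2 := hint_id.mul_prod hint_F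
  have ht3 : Integrable (fun p : ℝ × ℝ => F p.1 * p.2) π2 := hint_F.mul_prod hint_id
  have ht4 : Integrable (fun p : ℝ × ℝ => 1 * (p.2 * F p.2)) π2 := hone.mul_prod hint_xF
  have hhdef : h = fun p => ((p.1 * F p.1) * 1 - p.1 * F p.2) - F p.1 * p.2
      + 1 * (p.2 * F p.2) := by
    funext p; simp only [hh]; ring
  have hint_h : Integrable h π2 := by
    rw [hhdef]; exact ((ht1.sub ht2).sub ht3).add ht4
  have ht12 : Integrable (fun p : ℝ × ℝ => (p.1 * F p.1) * 1 - p.1 * F p.2) π2 :=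
    ht1.sub ht2
  have ht123 : Integrable
      (fun p : ℝ × ℝ => (p.1 * F p.1) * 1 - p.1 * F p.2 - F p.1 * p.2) π2 :=
    ht12.sub ht3
  have hD : ∫ p, h p ∂π2
      = 2 * (∫ x, x * F x ∂ν) - 2 * ((∫ x, x ∂ν) * (∫ x, F x ∂ν)) := by
    simp only [hhdef]
    rw [integral_add ht123 ht4, integral_sub ht12 ht3, integral_sub ht1 ht2]
    rw [integral_prod_mul (fun x => x * F x) (fun _ => (1:ℝ)),
      integral_prod_mul (fun x : ℝ => x) F, integral_prod_mul F (fun x : ℝ => x),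
      integral_prod_mul (fun _ => (1:ℝ)) (fun x => x * F x)]
    simp [measure_univ]
    ring
  -- positivity
  set l := max aX aY with hl
  set u := min bX bY with hu
  have hlu : l < u := max_lt (lt_min haXbX hov2) (lt_min hov1 haYbY)
  set s1 : ℝ := l + (u - l) / 3 with hs1
  set s2 : ℝ := l + 2 * ((u - l) / 3) with hs2
  have hls1 : l < s1 := by simp only [hs1]; linarith
  have hs1s2 : s1 < s2 := by simp only [hs1, hs2]; linarith
  have hs2u : s2 < u := by simp only [hs2]; linarith
  have haXl : aX ≤ l := le_max_left _ _
  have haYl : aY ≤ l := le_max_right _ _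
  have hubX : u ≤ bX := min_le_left _ _
  have hubY : u ≤ bY := min_le_right _ _
  have hI1 : 0 < ν (Set.Ioo l s1) := hνpos l s1 haXl hls1 (by linarith)
  have hI3 : 0 < ν (Set.Ioo s2 u) := hνpos s2 u (by linarith) hs2u hubX
  have hmid : 0 < ρ (Set.Ioo s1 s2) := hρpos s1 s2 (by linarith) hs1s2 (by linarith)
  set ε : ℝ := (s2 - s1) * (ρ (Set.Ioo s1 s2)).toReal with hε
  have hεpos : 0 < ε :=
    mul_pos (by linarith) (ENNReal.toReal_pos hmid.ne' (measure_ne_top _ _))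
  set S : Set (ℝ × ℝ) := (Set.Ioo s2 u) ×ˢ (Set.Ioo l s1) with hSdef
  have hSm : MeasurableSet S := measurableSet_Ioo.prod measurableSet_Ioo
  have hhge : ∀ p ∈ S, ε ≤ h p := by
    rintro ⟨x, y⟩ ⟨hx, hy⟩
    have hxy : s2 - s1 ≤ x - y := by
      have := hx.1; have := hy.2; simp only [Set.mem_Ioo] at *; linarith [hx.1, hy.2]
    have hFxy : (ρ (Set.Ioo s1 s2)).toReal ≤ F x - F y := by
      have hsub : Set.Iio y ∪ Set.Ioo s1 s2 ⊆ Set.Iio x := by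
        rintro z (hz | hz)
        · have : y < x := by
            have := hy.2; have := hx.1; simp only [Set.mem_Ioo] at *; linarith [hy.2, hx.1]
          exact lt_trans hz this
        · have : z < s2 := hz.2
          have : s2 < x := hx.1
          exact lt_trans hz.2 hx.1
      have hdisj : Disjoint (Set.Iio y) (Set.Ioo s1 s2) := by
        rw [Set.disjoint_left]
        rintro z hz ⟨hz1, hz2⟩
        have : y < s1 := hy.2
        linarith [Set.mem_Iio.mp hz]
      have hmeas : ρ (Set.Iio y) + ρ (Set.Ioo s1 s2) ≤ ρ (Set.Iio x) := by
        rw [← measure_union hdisj measurableSet_Ioo]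
        exact measure_mono hsub
      have hfin1 : ρ (Set.Iio y) ≠ ⊤ := measure_ne_top _ _
      have hfin2 : ρ (Set.Ioo s1 s2) ≠ ⊤ := measure_ne_top _ _
      have := ENNReal.toReal_mono (measure_ne_top _ _) hmeas
      rw [ENNReal.toReal_add hfin1 hfin2] at this
      simp only [hF]; linarith
    have hεle : ε ≤ (x - y) * (F x - F y) := by
      refine mul_le_mul hxy hFxy ENNReal.toReal_nonneg ?_
      linarith
    exact hεle
  have hhnn : ∀ p : ℝ × ℝ, 0 ≤ h p := by
    intro p
    simp only [hh]
    rcases le_total p.1 p.2 with hc | hc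
    · have := hFmono hc; nlinarith
    · have := hFmono hc; nlinarith
  have hπ2S : (π2 S).toReal = (ν (Set.Ioo s2 u)).toReal * (ν (Set.Ioo l s1)).toReal := by
    rw [hSdef, hπ2, Measure.prod_prod, ENNReal.toReal_mul]
  have hSlow : ε * (π2 S).toReal ≤ ∫ p in S, h p ∂π2 := by
    have h1 : ∫ p in S, (ε : ℝ) ∂π2 ≤ ∫ p in S, h p ∂π2 := by
      refine setIntegral_mono_on ((integrableOn_const_iff (C := ε)).mpr (Or.inr ?_))
        hint_h.integrableOn hSm hhge
      rw [hSdef, hπ2, Measure.prod_prod]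
      exact ENNReal.mul_lt_top (measure_lt_top _ _) (measure_lt_top _ _)
    rw [setIntegral_const] at h1
    rw [mul_comm]; simpa [smul_eq_mul, measureReal_def] using h1
  have hSpos : 0 < ε * (π2 S).toReal := by
    apply mul_pos hεpos
    rw [hπ2S]
    exact mul_pos (ENNReal.toReal_pos hI3.ne' (measure_ne_top _ _))
      (ENNReal.toReal_pos hI1.ne' (measure_ne_top _ _))
  have hDpos : 0 < ∫ p, h p ∂π2 := by
    calc (0:ℝ) < ε * (π2 S).toReal := hSpos
      _ ≤ ∫ p in S, h p ∂π2 := hSlow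
      _ ≤ ∫ p, h p ∂π2 :=
        setIntegral_le_integral hint_h (Filter.Eventually.of_forall hhnn)
  rw [hD] at hDpos
  linarith


lemma my_fub (ν ρ : Measure ℝ) [IsProbabilityMeasure ν] [IsProbabilityMeasure ρ]
    (hbound : ∀ᵐ x ∂ν, x ∈ Set.Icc 0 1) :
    ((ν.prod ρ) {p : ℝ × ℝ | p.2 < p.1}).toReal = ∫ x, (ρ (Set.Iio x)).toReal ∂ν ∧
    ∫ p in {p : ℝ × ℝ | p.2 < p.1}, p.1 ∂(ν.prod ρ)
      = ∫ x, x * (ρ (Set.Iio x)).toReal ∂ν := by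
  have hSm : MeasurableSet {p : ℝ × ℝ | p.2 < p.1} :=
    measurableSet_lt measurable_snd measurable_fst
  have hpre : ∀ x : ℝ, Prod.mk x ⁻¹' {p : ℝ × ℝ | p.2 < p.1} = Set.Iio x := by
    intro x; ext y; simp [Set.mem_Iio]
  constructor
  · rw [Measure.prod_apply hSm]
    rw [← integral_toReal ((measurable_measure_prodMk_left hSm).aemeasurable)
      (Filter.Eventually.of_forall fun x => measure_lt_top _ _)]
    exact integral_congr_ae (Filter.Eventually.of_forall fun x => by simp only [hpre])
  · have hint_id : Integrable (fun x : ℝ => x) ν := by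
      refine Integrable.mono' (integrable_const 1) measurable_id.aestronglyMeasurable ?_
      filter_upwards [hbound] with x hx
      rw [Real.norm_eq_abs, abs_le]; exact ⟨by linarith [hx.1], hx.2⟩
    have hfst : Integrable (fun p : ℝ × ℝ => p.1) (ν.prod ρ) := by
      have := hint_id.mul_prod (integrable_const (1:ℝ)) (ν := ρ)
      simpa using this
    have hind : Integrable ({p : ℝ × ℝ | p.2 < p.1}.indicator (fun p => p.1)) (ν.prod ρ) :=
      hfst.indicator hSm
    rw [← integral_indicator hSm, integral_prod _ hind]
    refine integral_congr_ae (Filter.Eventually.of_forall fun x => ?_)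
    have : (fun y => {p : ℝ × ℝ | p.2 < p.1}.indicator (fun p => p.1) (x, y))
        = (Set.Iio x).indicator (fun _ => x) := by
      funext y
      by_cases hyx : y < x
      · simp [Set.indicator_apply, hyx]
      · simp [Set.indicator_apply, hyx]
    beta_reduce
    rw [this, integral_indicator measurableSet_Iio, setIntegral_const, smul_eq_mul, mul_comm, measureReal_def]

theorem stmt0 {Ω : Type*} [MeasurableSpace Ω] (μ : Measure Ω) [IsProbabilityMeasure μ]
    (X Y : Ω → ℝ) (hX : Measurable X) (hY : Measurable Y)
    (hindep : IndepFun X Y μ)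
    (hXatom : ∀ r : ℝ, μ {ω | X ω = r} = 0) (hYatom : ∀ r : ℝ, μ {ω | Y ω = r} = 0)
    (aX bX aY bY : ℝ) (haX : 0 ≤ aX) (hbX : bX ≤ 1) (haY : 0 ≤ aY) (hbY : bY ≤ 1)
    (hXsupp : IntervalSupport μ X aX bX) (hYsupp : IntervalSupport μ Y aY bY)
    (hXY : 0 < μ {ω | X ω > Y ω}) (hYX : 0 < μ {ω | Y ω > X ω}) :
    condExpEvent μ X {ω | X ω > Y ω} > ∫ ω, X ω ∂μ := by
  obtain ⟨haXbX, hXicc, hXpos⟩ := hXsupp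
  obtain ⟨haYbY, hYicc, hYpos⟩ := hYsupp
  set ν := μ.map X with hν
  set ρ := μ.map Y with hρ
  haveI : IsProbabilityMeasure ν := Measure.isProbabilityMeasure_map hX.aemeasurable
  haveI : IsProbabilityMeasure ρ := Measure.isProbabilityMeasure_map hY.aemeasurable
  have hpairm : Measurable (fun ω => (X ω, Y ω)) := hX.prodMk hY
  have hmap : μ.map (fun ω => (X ω, Y ω)) = ν.prod ρ :=
    (indepFun_iff_map_prod_eq_prod_map_map hX.aemeasurable hY.aemeasurable).mp hindep
  have hSm : MeasurableSet {p : ℝ × ℝ | p.2 < p.1} :=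
    measurableSet_lt measurable_snd measurable_fst
  have hSm' : MeasurableSet {p : ℝ × ℝ | p.1 < p.2} :=
    measurableSet_lt measurable_fst measurable_snd
  -- measure transfers
  have hμA : μ {ω | X ω > Y ω} = (ν.prod ρ) {p : ℝ × ℝ | p.2 < p.1} := by
    rw [← hmap, Measure.map_apply hpairm hSm]
    rfl
  have hμB : μ {ω | Y ω > X ω} = (ν.prod ρ) {p : ℝ × ℝ | p.1 < p.2} := by
    rw [← hmap, Measure.map_apply hpairm hSm']
    rfl
  -- support facts on ν, ρ
  have hνIcc : ν (Set.Icc aX bX) = 1 := by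
    rw [hν, Measure.map_apply hX measurableSet_Icc]; exact hXicc
  have hρIcc : ρ (Set.Icc aY bY) = 1 := by
    rw [hρ, Measure.map_apply hY measurableSet_Icc]; exact hYicc
  have hνc : ν (Set.Icc aX bX)ᶜ = 0 := by
    rw [measure_compl measurableSet_Icc (measure_ne_top _ _), hνIcc, measure_univ]
    simp
  have hρc : ρ (Set.Icc aY bY)ᶜ = 0 := by
    rw [measure_compl measurableSet_Icc (measure_ne_top _ _), hρIcc, measure_univ]
    simp
  have hνae : ∀ᵐ x ∂ν, x ∈ Set.Icc aX bX := by
    rw [ae_iff]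
    convert hνc using 2; rfl
  have hbound : ∀ᵐ x ∂ν, x ∈ Set.Icc 0 1 := by
    filter_upwards [hνae] with x hx
    exact ⟨le_trans haX hx.1, le_trans hx.2 hbX⟩
  have hρae : ∀ᵐ y ∂ρ, y ∈ Set.Icc aY bY := by
    rw [ae_iff]
    convert hρc using 2; rfl
  have hνpos : ∀ c d : ℝ, aX ≤ c → c < d → d ≤ bX → 0 < ν (Set.Ioo c d) := by
    intro c d h1 h2 h3
    rw [hν, Measure.map_apply hX measurableSet_Ioo]
    exact hXpos c d h1 h2 h3
  have hρpos : ∀ c d : ℝ, aY ≤ c → c < d → d ≤ bY → 0 < ρ (Set.Ioo c d) := by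
    intro c d h1 h2 h3
    rw [hρ, Measure.map_apply hY measurableSet_Ioo]
    exact hYpos c d h1 h2 h3
  -- overlap of supports
  have hnullXY : ∀ (s : Set (ℝ × ℝ)),
      (∀ p : ℝ × ℝ, p ∈ s → p.1 ∈ Set.Icc aX bX → p.2 ∈ Set.Icc aY bY → False) →
      (ν.prod ρ) s = 0 := by
    intro s hs
    have hsub : s ⊆ ((Set.Icc aX bX)ᶜ ×ˢ Set.univ) ∪ (Set.univ ×ˢ (Set.Icc aY bY)ᶜ) := by
      intro p hp
      by_cases h1 : p.1 ∈ Set.Icc aX bX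
      · by_cases h2 : p.2 ∈ Set.Icc aY bY
        · exact absurd (hs p hp h1 h2) (not_false)
        · exact Or.inr ⟨Set.mem_univ _, h2⟩
      · exact Or.inl ⟨h1, Set.mem_univ _⟩
    refine le_antisymm ?_ (by simp)
    calc (ν.prod ρ) s ≤ (ν.prod ρ) (((Set.Icc aX bX)ᶜ ×ˢ Set.univ)
          ∪ (Set.univ ×ˢ (Set.Icc aY bY)ᶜ)) := measure_mono hsub
      _ ≤ (ν.prod ρ) ((Set.Icc aX bX)ᶜ ×ˢ Set.univ)
          + (ν.prod ρ) (Set.univ ×ˢ (Set.Icc aY bY)ᶜ) := measure_union_le _ _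
      _ = 0 := by rw [Measure.prod_prod, Measure.prod_prod, hνc, hρc]; simp
  have hov1 : aY < bX := by
    by_contra hcon
    push_neg at hcon
    have : (ν.prod ρ) {p : ℝ × ℝ | p.2 < p.1} = 0 := by
      refine hnullXY _ ?_
      rintro ⟨x, y⟩ hp hx hy
      have : y < x := hp
      have : x ≤ bX := hx.2
      have : aY ≤ y := hy.1
      linarith [hp, hx.2, hy.1]
    rw [hμA, this] at hXY
    exact lt_irrefl _ hXY
  have hov2 : aX < bY := by
    by_contra hcon
    push_neg at hcon
    have : (ν.prod ρ) {p : ℝ × ℝ | p.1 < p.2} = 0 := by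
      refine hnullXY _ ?_
      rintro ⟨x, y⟩ hp hx hy
      have : x < y := hp
      linarith [hp, hx.1, hy.2]
    rw [hμB, this] at hYX
    exact lt_irrefl _ hYX
  -- Fubini identities
  obtain ⟨hfub1, hfub2⟩ := my_fub ν ρ hbound
  -- integral transfers
  have hEX : ∫ ω, X ω ∂μ = ∫ x, x ∂ν := by
    rw [hν]
    exact (integral_map (f := fun x : ℝ => x) hX.aemeasurable
      measurable_id.aestronglyMeasurable).symm
  have hindmeas : Measurable ({p : ℝ × ℝ | p.2 < p.1}.indicator (fun p : ℝ × ℝ => p.1)) :=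
    measurable_fst.indicator hSm
  have hAmeas : MeasurableSet {ω | X ω > Y ω} := measurableSet_lt hY hX
  have hEA : ∫ ω in {ω | X ω > Y ω}, X ω ∂μ
      = ∫ p in {p : ℝ × ℝ | p.2 < p.1}, p.1 ∂(ν.prod ρ) := by
    rw [← integral_indicator hSm, ← hmap,
      integral_map hpairm.aemeasurable hindmeas.aestronglyMeasurable,
      ← integral_indicator hAmeas]
    refine integral_congr_ae (Filter.Eventually.of_forall fun ω => ?_)
    by_cases hω : Y ω < X ω
    · simp [Set.indicator_apply, hω]
    · simp [Set.indicator_apply, hω]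
  -- conclude
  have hcheb := my_cheb ν ρ aX bX aY bY hbound hνpos hρpos haXbX haYbY hov1 hov2
  rw [gt_iff_lt, condExpEvent, hEX, hEA, hμA, hfub1, hfub2]
  have hq : 0 < ∫ x, (ρ (Set.Iio x)).toReal ∂ν := by
    rw [← hfub1]
    rw [hμA] at hXY
    exact ENNReal.toReal_pos hXY.ne' (measure_ne_top _ _)
  rw [inv_mul_eq_div, lt_div_iff₀ hq]
  calc (∫ x, x ∂ν) * ∫ x, (ρ (Set.Iio x)).toReal ∂ν
      = (∫ x, (ρ (Set.Iio x)).toReal ∂ν) * ∫ x, x ∂ν := by ring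
    _ < _ := hcheb
end

section
/- For each i, the function p_i : ℝ_{>0}^n → [0,1] defined by p_i(β) = P[β_i u_i = max_{j} β_j u_j] is continuous on ℝ_{>0}^n. -/
open MeasureTheory ProbabilityTheory Filter Topology


lemma ties_aux {Ω : Type*} [MeasurableSpace Ω] (μ : Measure Ω) [IsProbabilityMeasure μ]
    {X Y : Ω → ℝ} (hX : Measurable X) (hY : Measurable Y)
    (hind : IndepFun X Y μ) (hatomY : ∀ r : ℝ, μ {ω | Y ω = r} = 0)
    {c : ℝ} (hc : c ≠ 0) : μ {ω | X ω = c * Y ω} = 0 := by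
  have hmap : Measure.map (fun ω => (X ω, Y ω)) μ
      = (Measure.map X μ).prod (Measure.map Y μ) :=
    (indepFun_iff_map_prod_eq_prod_map_map hX.aemeasurable hY.aemeasurable).mp hind
  have hνY : IsProbabilityMeasure (Measure.map Y μ) := Measure.isProbabilityMeasure_map hY.aemeasurable
  have hS : MeasurableSet {p : ℝ × ℝ | p.1 = c * p.2} :=
    measurableSet_eq_fun measurable_fst (measurable_const.mul measurable_snd)
  have h1 : μ {ω | X ω = c * Y ω}
      = Measure.map (fun ω => (X ω, Y ω)) μ {p : ℝ × ℝ | p.1 = c * p.2} := by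
    rw [Measure.map_apply (hX.prodMk hY) hS]
    rfl
  rw [h1, hmap, Measure.prod_apply hS]
  have hz : ∀ x : ℝ, (Measure.map Y μ) (Prod.mk x ⁻¹' {p : ℝ × ℝ | p.1 = c * p.2}) = 0 := by
    intro x
    have hset : Prod.mk x ⁻¹' {p : ℝ × ℝ | p.1 = c * p.2} = {x / c} := by
      ext y
      simp only [Set.mem_preimage, Set.mem_setOf_eq, Set.mem_singleton_iff]
      rw [eq_div_iff hc, mul_comm]
      exact eq_comm
    rw [hset, Measure.map_apply hY (measurableSet_singleton _)]
    exact hatomY (x / c)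
  calc ∫⁻ x, (Measure.map Y μ) (Prod.mk x ⁻¹' {p : ℝ × ℝ | p.1 = c * p.2}) ∂(Measure.map X μ)
      = ∫⁻ _, 0 ∂(Measure.map X μ) := by simp_rw [hz]
    _ = 0 := lintegral_zero

theorem stmt4 {Ω : Type*} [MeasurableSpace Ω] (μ : Measure Ω) [IsProbabilityMeasure μ]
    {n : ℕ} (hn : 0 < n) (u : Fin n → Ω → ℝ) (hmeas : ∀ i, Measurable (u i))
    (hindep : iIndepFun u μ)
    (hrange : ∀ i ω, u i ω ∈ Set.Icc (0:ℝ) 1)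
    (hatom : ∀ i (r : ℝ), μ {ω | u i ω = r} = 0)
    (i : Fin n) :
    ContinuousOn (fun β : Fin n → ℝ => (resProb μ u β i).toReal)
      {β : Fin n → ℝ | ∀ j, 0 < β j} := by
  intro β₀ hβ₀
  haveI : Nonempty (Fin n) := ⟨i⟩
  have hβ₀' : ∀ j, 0 < β₀ j := hβ₀
  set r : Fin n → ℝ := fun j => β₀ j / β₀ i with hr
  have hβ₀i : (0:ℝ) < β₀ i := hβ₀' i
  have hrpos : ∀ j, 0 < r j := fun j => div_pos (hβ₀' j) hβ₀i
  have hu0 : ∀ j ω, 0 ≤ u j ω := fun j ω => (hrange j ω).1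
  set C : (Fin n → ℝ) → Set Ω := fun s => {ω | ∀ j, j ≠ i → s j * u j ω ≤ u i ω} with hC
  have hCmeas : ∀ s, MeasurableSet (C s) := by
    intro s
    have : C s = ⋂ j, ⋂ _ : j ≠ i, {ω | s j * u j ω ≤ u i ω} := by
      ext ω; simp [hC]
    rw [this]
    exact MeasurableSet.iInter fun j => MeasurableSet.iInter fun _ =>
      measurableSet_le (measurable_const.mul (hmeas j)) (hmeas i)
  have hCmono : ∀ s t : Fin n → ℝ, (∀ j, s j ≤ t j) → C t ⊆ C s := by
    intro s t hst ω hω j hj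
    exact le_trans (mul_le_mul_of_nonneg_right (hst j) (hu0 j ω)) (hω j hj)
  have hres : ∀ β : Fin n → ℝ, (∀ j, 0 < β j) →
      resProb μ u β i = μ (C (fun j => β j / β i)) := by
    intro β hβ
    unfold resProb
    congr 1
    ext ω
    simp only [Set.mem_setOf_eq, hC]
    constructor
    · intro h j hj
      have hle : β j * u j ω ≤ β i * u i ω := by
        rw [h]
        exact le_ciSup (f := fun j => β j * u j ω) (Set.finite_range _).bddAbove j
      rw [div_mul_eq_mul_div, div_le_iff₀ (hβ i)]
      nlinarith
    · intro h
      have hub : ∀ j, β j * u j ω ≤ β i * u i ω := by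
        intro j
        by_cases hj : j = i
        · subst hj; exact le_refl _
        · have hd := h j hj
          rw [div_mul_eq_mul_div, div_le_iff₀ (hβ i)] at hd
          nlinarith
      exact le_antisymm (le_ciSup (f := fun j => β j * u j ω) (Set.finite_range _).bddAbove i) (ciSup_le hub)
  set D : ℝ → Fin n → Set Ω := fun ε j =>
    {ω | (1-ε) * r j * u j ω ≤ u i ω ∧ u i ω < (1+ε) * r j * u j ω} with hD
  have hDmeas : ∀ ε j, MeasurableSet (D ε j) := fun ε j =>
    (measurableSet_le (measurable_const.mul (hmeas j)) (hmeas i)).inter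
      (measurableSet_lt (hmeas i) (measurable_const.mul (hmeas j)))
  have hDmono : ∀ (ε ε' : ℝ) j, ε ≤ ε' → D ε j ⊆ D ε' j := by
    intro ε ε' j h ω hω
    obtain ⟨h1, h2⟩ := hω
    have h0 : 0 ≤ r j * u j ω := mul_nonneg (hrpos j).le (hu0 j ω)
    constructor
    · nlinarith
    · nlinarith
  have hDzero : ∀ j, j ≠ i → Tendsto (fun k : ℕ => μ (D (1/(k+1)) j)) atTop (𝓝 0) := by
    intro j hj
    have hanti : Antitone (fun k : ℕ => D (1/((k:ℝ)+1)) j) := by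
      intro k k' hk
      apply hDmono
      apply one_div_le_one_div_of_le (by positivity)
      exact_mod_cast add_le_add_left (Nat.cast_le.mpr hk) 1
    have hten : Tendsto (fun k : ℕ => (1/((k:ℝ)+1))) atTop (𝓝 0) :=
      tendsto_one_div_add_atTop_nhds_zero_nat
    have hinter : (⋂ k : ℕ, D (1/((k:ℝ)+1)) j) ⊆ {ω | u i ω = r j * u j ω} := by
      intro ω hω
      simp only [Set.mem_iInter] at hω
      have h1 : r j * u j ω ≤ u i ω := by
        have ht : Tendsto (fun k : ℕ => (1 - 1/((k:ℝ)+1)) * r j * u j ω) atTop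
            (𝓝 ((1 - 0) * r j * u j ω)) :=
          ((tendsto_const_nhds.sub hten).mul tendsto_const_nhds).mul tendsto_const_nhds
        have := le_of_tendsto ht (Eventually.of_forall fun k => (hω k).1)
        simpa using this
      have h2 : u i ω ≤ r j * u j ω := by
        have ht : Tendsto (fun k : ℕ => (1 + 1/((k:ℝ)+1)) * r j * u j ω) atTop
            (𝓝 ((1 + 0) * r j * u j ω)) :=
          ((tendsto_const_nhds.add hten).mul tendsto_const_nhds).mul tendsto_const_nhds
        have := ge_of_tendsto ht (Eventually.of_forall fun k => ((hω k).2).le)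
        simpa using this
      exact le_antisymm h2 h1
    have hzero : μ (⋂ k : ℕ, D (1/((k:ℝ)+1)) j) = 0 :=
      measure_mono_null hinter
        (ties_aux μ (hmeas i) (hmeas j) (hindep.indepFun (Ne.symm hj)) (hatom j)
          (ne_of_gt (hrpos j)))
    have := tendsto_measure_iInter_atTop (μ := μ) (s := fun k : ℕ => D (1/((k:ℝ)+1)) j)
      (fun k => (hDmeas _ j).nullMeasurableSet) hanti ⟨0, measure_ne_top μ _⟩
    rw [hzero] at this
    exact this
  rw [ContinuousWithinAt, Metric.tendsto_nhds]
  intro η hη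
  have hnR : (0:ℝ) < n := Nat.cast_pos.mpr hn
  obtain ⟨k, hk⟩ : ∃ k : ℕ, ∀ j ∈ Finset.univ.erase i,
      μ (D (1/((k:ℝ)+1)) j) < ENNReal.ofReal (η/(2*n)) := by
    have hev : ∀ᶠ k : ℕ in atTop, ∀ j ∈ Finset.univ.erase i,
        μ (D (1/((k:ℝ)+1)) j) < ENNReal.ofReal (η/(2*n)) := by
      rw [eventually_all_finset]
      intro j hj
      exact (hDzero j (Finset.ne_of_mem_erase hj)).eventually_lt_const
        (ENNReal.ofReal_pos.mpr (by positivity))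
    exact hev.exists
  set ε : ℝ := 1/((k:ℝ)+1) with hεdef
  have hε : 0 < ε := by positivity
  set Cp := C (fun j => (1+ε) * r j) with hCp
  set Cm := C (fun j => (1-ε) * r j) with hCm
  have hsub : Cp ⊆ Cm := hCmono _ _ (fun j => by nlinarith [hrpos j])
  have hdiff : Cm \ Cp ⊆ ⋃ j ∈ Finset.univ.erase i, D ε j := by
    intro ω hω
    obtain ⟨hω1, hω2⟩ := hω
    simp only [hCp, hC, Set.mem_setOf_eq, not_forall] at hω2
    obtain ⟨j, hj, hlt⟩ := hω2
    refine Set.mem_biUnion (Finset.mem_erase.mpr ⟨hj, Finset.mem_univ j⟩) ?_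
    exact ⟨hω1 j hj, not_le.mp hlt⟩
  have hμdiff : μ (Cm \ Cp) ≤ ENNReal.ofReal (η/2) := by
    calc μ (Cm \ Cp) ≤ μ (⋃ j ∈ Finset.univ.erase i, D ε j) := measure_mono hdiff
      _ ≤ ∑ j ∈ Finset.univ.erase i, μ (D ε j) := measure_biUnion_finset_le _ _
      _ ≤ ∑ _j ∈ Finset.univ.erase i, ENNReal.ofReal (η/(2*n)) :=
          Finset.sum_le_sum fun j hj => (hk j hj).le
      _ = (Finset.univ.erase i).card * ENNReal.ofReal (η/(2*n)) := by
          rw [Finset.sum_const, nsmul_eq_mul]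
      _ ≤ (n : ENNReal) * ENNReal.ofReal (η/(2*n)) := by
          apply mul_le_mul_left
          have hcard : (Finset.univ.erase i).card ≤ n :=
            le_trans Finset.card_erase_le (by simp)
          exact_mod_cast hcard
      _ = ENNReal.ofReal ((n : ℝ) * (η/(2*n))) := by
          rw [ENNReal.ofReal_mul (by positivity), ENNReal.ofReal_natCast]
      _ = ENNReal.ofReal (η/2) := by
          congr 1
          field_simp
  have hev : ∀ᶠ β in 𝓝 β₀, ∀ j, (1-ε) * r j ≤ β j / β i ∧ β j / β i ≤ (1+ε) * r j := by
    rw [eventually_all]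
    intro j
    have hcont : ContinuousAt (fun β : Fin n → ℝ => β j / β i) β₀ :=
      ((continuous_apply j).continuousAt).div ((continuous_apply i).continuousAt)
        (ne_of_gt hβ₀i)
    have hmem : Set.Icc ((1-ε)*r j) ((1+ε)*r j) ∈ 𝓝 (β₀ j / β₀ i) := by
      apply Icc_mem_nhds
      · nlinarith [hrpos j]
      · nlinarith [hrpos j]
    filter_upwards [hcont.preimage_mem_nhds hmem] with β hβ
    exact ⟨hβ.1, hβ.2⟩
  filter_upwards [nhdsWithin_le_nhds hev, self_mem_nhdsWithin] with β hβrat hβS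
  have hβS' : ∀ j, 0 < β j := hβS
  have h1 : resProb μ u β i = μ (C (fun j => β j / β i)) := hres β hβS'
  have h0 : resProb μ u β₀ i = μ (C r) := hres β₀ hβ₀'
  have hle1 : Cp ⊆ C (fun j => β j / β i) := hCmono _ _ fun j => (hβrat j).2
  have hle2 : C (fun j => β j / β i) ⊆ Cm := hCmono _ _ fun j => (hβrat j).1
  have hle3 : Cp ⊆ C r := hCmono _ _ fun j => by nlinarith [hrpos j]
  have hle4 : C r ⊆ Cm := hCmono _ _ fun j => by nlinarith [hrpos j]
  have hkey : (μ Cm).toReal - (μ Cp).toReal ≤ η/2 := by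
    have hmd : μ (Cm \ Cp) = μ Cm - μ Cp :=
      measure_diff hsub (hCmeas _).nullMeasurableSet (measure_ne_top μ _)
    have h3 : (μ Cm - μ Cp).toReal ≤ η/2 := by
      rw [← hmd]
      calc (μ (Cm \ Cp)).toReal ≤ (ENNReal.ofReal (η/2)).toReal :=
            ENNReal.toReal_mono ENNReal.ofReal_ne_top hμdiff
        _ = η/2 := ENNReal.toReal_ofReal (by positivity)
    rwa [ENNReal.toReal_sub_of_le (measure_mono hsub) (measure_ne_top μ _)] at h3
  have hmono' : ∀ s t : Set Ω, s ⊆ t → (μ s).toReal ≤ (μ t).toReal := fun s t hst =>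
    ENNReal.toReal_mono (measure_ne_top μ _) (measure_mono hst)
  rw [Real.dist_eq, h1, h0]
  have b1 : (μ Cp).toReal ≤ (μ (C (fun j => β j / β i))).toReal := hmono' _ _ hle1
  have b2 : (μ (C (fun j => β j / β i))).toReal ≤ (μ Cm).toReal := hmono' _ _ hle2
  have b3 : (μ Cp).toReal ≤ (μ (C r)).toReal := hmono' _ _ hle3
  have b4 : (μ (C r)).toReal ≤ (μ Cm).toReal := hmono' _ _ hle4
  have : |(μ (C (fun j => β j / β i))).toReal - (μ (C r)).toReal| ≤ η/2 :=
    abs_le.mpr ⟨by linarith, by linarith⟩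
  linarith [abs_nonneg ((μ (C (fun j => β j / β i))).toReal - (μ (C r)).toReal)]
end

section
/- Bounded probability change: fix a set of multipliers β ∈ ℝ_{>0}^n, an agent i with utility distribution having density bounded above by q on [0,1], and ε > 0. Let β' equal β except β'_i = (1+ε)β_i. Then p_i(β') ≤ p_i(β) + 2qε. -/
open MeasureTheory ProbabilityTheory

private lemma real_len_aux (m ε : ℝ) (hε : 0 < ε) :
    min m 1 - max (m/(1+ε)) 0 ≤ ε := by
  have h1ε : (0:ℝ) < 1 + ε := by linarith
  set a := max (m/(1+ε)) 0 with ha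
  have h1 : m/(1+ε) ≤ a := le_max_left _ _
  have h2 : (0:ℝ) ≤ a := le_max_right _ _
  have hm : m ≤ (1+ε)*a := by rw [div_le_iff₀ h1ε] at h1; linarith
  rcases le_or_gt a 1 with h | h
  · nlinarith [min_le_left m 1]
  · nlinarith [min_le_right m 1]

theorem stmt8 {Ω : Type*} [MeasurableSpace Ω] (μ : Measure Ω) [IsProbabilityMeasure μ]
    {n : ℕ} (hn : 0 < n) (u : Fin n → Ω → ℝ) (hmeas : ∀ i, Measurable (u i))
    (hindep : iIndepFun u μ)
    (hrange : ∀ i ω, u i ω ∈ Set.Icc (0:ℝ) 1)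
    (hatom : ∀ i (r : ℝ), μ {ω | u i ω = r} = 0)
    (β : Fin n → ℝ) (hβ : ∀ j, 0 < β j) (i : Fin n)
    (q ε : ℝ) (hq : 0 < q) (hε : 0 < ε)
    (hpdf : PDFBoundedAbove μ (u i) q) :
    (resProb μ u (Function.update β i ((1+ε) * β i)) i).toReal
      ≤ (resProb μ u β i).toReal + 2 * q * ε := by
  classical
  have h1ε : (0:ℝ) < 1 + ε := by linarith
  have hβi := hβ i
  haveI : Nonempty (Fin n) := ⟨i⟩
  set β' : Fin n → ℝ := Function.update β i ((1+ε) * β i) with hβ'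
  have hβ'i : β' i = (1+ε) * β i := Function.update_self i _ β
  have hβ'ne : ∀ j, j ≠ i → β' j = β j := fun j hj => Function.update_of_ne hj _ β
  -- trivial case: every index equals i
  by_cases hone : ∀ j : Fin n, j = i
  · have hsup : ∀ (γ : Fin n → ℝ) (ω : Ω), (⨆ j, γ j * u j ω) = γ i * u i ω := by
      intro γ ω
      have : (fun j => γ j * u j ω) = fun _ => γ i * u i ω := funext fun j => by rw [hone j]
      rw [this, ciSup_const]
    have h1 : resProb μ u β' i = 1 := by
      have : {ω | β' i * u i ω = ⨆ j, β' j * u j ω} = Set.univ := by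
        ext ω; simp [hsup β' ω]
      rw [resProb, this, measure_univ]
    have h2 : resProb μ u β i = 1 := by
      have : {ω | β i * u i ω = ⨆ j, β j * u j ω} = Set.univ := by
        ext ω; simp [hsup β ω]
      rw [resProb, this, measure_univ]
    rw [h1, h2]
    nlinarith [ENNReal.toReal_one]
  push_neg at hone
  obtain ⟨j₀, hj₀⟩ := hone
  -- the finset of other indices
  set T : Finset (Fin n) := Finset.univ.erase i with hT
  have hTne : T.Nonempty := ⟨j₀, Finset.mem_erase.mpr ⟨hj₀, Finset.mem_univ _⟩⟩
  have hTa : T.attach.Nonempty := hTne.attach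
  set M : Ω → ℝ := fun ω => T.attach.sup' hTa (fun j => (β j.1 / β i) * u j.1 ω) with hM
  have hM_meas : Measurable M := by
    have h := Finset.measurable_sup' hTa
      (f := fun (j : ↥T) (ω : Ω) => (β j.1 / β i) * u j.1 ω)
      (fun j _ => (hmeas j.1).const_mul _)
    have heq : M = T.attach.sup' hTa (fun (j : ↥T) (ω : Ω) => (β j.1 / β i) * u j.1 ω) :=
      funext fun ω =>
        (Finset.sup'_apply hTa (fun (j : ↥T) (ω : Ω) => (β j.1 / β i) * u j.1 ω) ω).symm
    rw [heq]; exact h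
  set X : Ω → ℝ := u i with hX
  have hX_meas : Measurable X := hmeas i
  set E : Set Ω := {ω | M ω / (1+ε) ≤ X ω ∧ X ω < M ω} with hE
  have hbdd : ∀ (γ : Fin n → ℝ) (ω : Ω), BddAbove (Set.range fun j => γ j * u j ω) :=
    fun γ ω => (Set.finite_range _).bddAbove
  -- set inclusion
  have hincl : {ω | β' i * u i ω = ⨆ j, β' j * u j ω}
      ⊆ {ω | β i * u i ω = ⨆ j, β j * u j ω} ∪ E := by
    intro ω hω
    simp only [Set.mem_setOf_eq] at hω
    have ha : ∀ k, β' k * u k ω ≤ (1+ε) * β i * u i ω := by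
      intro k
      have := le_ciSup (hbdd β' ω) k
      rw [← hω, hβ'i] at this
      linarith [this]
    by_cases hA : β i * u i ω = ⨆ j, β j * u j ω
    · exact Or.inl hA
    · right
      have hle : β i * u i ω ≤ ⨆ j, β j * u j ω := le_ciSup (hbdd β ω) i
      have hlt : β i * u i ω < ⨆ j, β j * u j ω := lt_of_le_of_ne hle hA
      -- the sup is attained
      have hconv : (⨆ j, β j * u j ω) = Finset.univ.sup' Finset.univ_nonempty
          (fun j => β j * u j ω) := (Finset.sup'_univ_eq_ciSup _).symm
      obtain ⟨k, -, hk⟩ := Finset.exists_mem_eq_sup' (Finset.univ_nonempty (α := Fin n))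
        (fun j => β j * u j ω)
      rw [hconv] at hlt
      rw [hk] at hlt
      have hki : k ≠ i := by rintro rfl; exact lt_irrefl _ hlt
      have hkT : k ∈ T := Finset.mem_erase.mpr ⟨hki, Finset.mem_univ _⟩
      have hkub : β k * u k ω ≤ (1+ε) * β i * u i ω := by
        have := ha k; rwa [hβ'ne k hki] at this
      constructor
      · -- M ω / (1+ε) ≤ X ω
        rw [div_le_iff₀ h1ε]
        apply Finset.sup'_le
        intro j _
        have hj := ha j.1
        rcases eq_or_ne j.1 i with hji | hji
        · rw [hji]
          have h0i : (0:ℝ) ≤ u i ω := (hrange i ω).1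
          rw [div_self hβi.ne', one_mul]
          nlinarith
        · rw [hβ'ne j.1 hji] at hj
          rw [div_mul_eq_mul_div, div_le_iff₀ hβi]
          nlinarith
      · -- X ω < M ω
        have hkM : (β k / β i) * u k ω ≤ M ω :=
          Finset.le_sup' (f := fun (j : ↥T) => (β j.1 / β i) * u j.1 ω)
            (Finset.mem_attach T ⟨k, hkT⟩)
        have : X ω < (β k / β i) * u k ω := by
          rw [div_mul_eq_mul_div, lt_div_iff₀ hβi]
          nlinarith
        linarith
  -- independence of M and X
  have hind : IndepFun M X μ := by
    have hdisj : Disjoint T ({i} : Finset (Fin n)) :=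
      Finset.disjoint_singleton_right.mpr (Finset.notMem_erase i _)
    have hbase := hindep.indepFun_finset T {i} hdisj hmeas
    set φ : ((j : T) → ℝ) → ℝ :=
      fun v => T.attach.sup' hTa (fun j => (β j.1 / β i) * v j) with hφ
    set ψ : ((j : ({i} : Finset (Fin n))) → ℝ) → ℝ :=
      fun v => v ⟨i, Finset.mem_singleton_self i⟩ with hψ
    have hφm : Measurable φ := by
      have h := Finset.measurable_sup' hTa
        (f := fun (j : ↥T) (v : (j : T) → ℝ) => (β j.1 / β i) * v j)
        (fun j _ => (measurable_pi_apply j).const_mul _)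
      have heq : φ = T.attach.sup' hTa (fun (j : ↥T) (v : (j : T) → ℝ) => (β j.1 / β i) * v j) :=
        funext fun v =>
          (Finset.sup'_apply hTa (fun (j : ↥T) (v : (j : T) → ℝ) => (β j.1 / β i) * v j) v).symm
      rw [heq]; exact h
    have hψm : Measurable ψ := measurable_pi_apply _
    exact hbase.comp hφm hψm
  -- measure of E
  set ν : Measure ℝ := μ.map X with hν
  set ρ : Measure ℝ := μ.map M with hρ
  haveI : IsProbabilityMeasure ν := Measure.isProbabilityMeasure_map hX_meas.aemeasurable
  haveI : IsProbabilityMeasure ρ := Measure.isProbabilityMeasure_map hM_meas.aemeasurable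
  have hslice : ∀ m : ℝ, ν (Set.Ico (m/(1+ε)) m) ≤ ENNReal.ofReal (q*ε) := by
    intro m
    set a' : ℝ := max (m/(1+ε)) 0 with ha'
    set b' : ℝ := min m 1 with hb'
    have hνeq : ν (Set.Ico (m/(1+ε)) m) = μ (X ⁻¹' Set.Ico (m/(1+ε)) m) :=
      Measure.map_apply hX_meas measurableSet_Ico
    have hsub : X ⁻¹' Set.Ico (m/(1+ε)) m ⊆ (X ⁻¹' {a'}) ∪ (X ⁻¹' Set.Ioc a' b') := by
      intro ω hω
      have hx0 := (hrange i ω).1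
      have hx1 := (hrange i ω).2
      obtain ⟨hxa, hxb⟩ := hω
      have h1 : a' ≤ X ω := max_le hxa hx0
      have h2 : X ω ≤ b' := le_min hxb.le hx1
      rcases eq_or_lt_of_le h1 with heq | hlt
      · exact Or.inl heq.symm
      · exact Or.inr ⟨hlt, h2⟩
    have hzero : μ (X ⁻¹' {a'}) = 0 := by
      have : X ⁻¹' {a'} = {ω | u i ω = a'} := by ext ω; simp [hX]
      rw [this]; exact hatom i a'
    calc ν (Set.Ico (m/(1+ε)) m) = μ (X ⁻¹' Set.Ico (m/(1+ε)) m) := hνeq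
      _ ≤ μ ((X ⁻¹' {a'}) ∪ (X ⁻¹' Set.Ioc a' b')) := measure_mono hsub
      _ ≤ μ (X ⁻¹' {a'}) + μ (X ⁻¹' Set.Ioc a' b') := measure_union_le _ _
      _ = μ (X ⁻¹' Set.Ioc a' b') := by rw [hzero, zero_add]
      _ ≤ ENNReal.ofReal (q*ε) := by
          rcases le_or_gt a' b' with hab | hab
          · have hbound := hpdf a' b' hab
            have : μ (X ⁻¹' Set.Ioc a' b') = μ {ω | u i ω ∈ Set.Ioc a' b'} := rfl
            rw [this]
            refine hbound.trans (ENNReal.ofReal_le_ofReal ?_)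
            have := real_len_aux m ε hε
            nlinarith
          · rw [Set.Ioc_eq_empty (not_lt.mpr hab.le), Set.preimage_empty, measure_empty]
            exact zero_le
  have hTset : MeasurableSet {p : ℝ × ℝ | p.1/(1+ε) ≤ p.2 ∧ p.2 < p.1} := by
    apply MeasurableSet.inter
    · exact measurableSet_le (measurable_fst.div_const _) measurable_snd
    · exact measurableSet_lt measurable_snd measurable_fst
  have hEmeas : μ E ≤ ENNReal.ofReal (q*ε) := by
    have hpair : Measurable fun ω => (M ω, X ω) := hM_meas.prodMk hX_meas
    have hEeq : E = (fun ω => (M ω, X ω)) ⁻¹' {p : ℝ × ℝ | p.1/(1+ε) ≤ p.2 ∧ p.2 < p.1} := rfl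
    have hmap : μ.map (fun ω => (M ω, X ω)) = ρ.prod ν :=
      (indepFun_iff_map_prod_eq_prod_map_map hM_meas.aemeasurable hX_meas.aemeasurable).mp hind
    have : μ E = (ρ.prod ν) {p : ℝ × ℝ | p.1/(1+ε) ≤ p.2 ∧ p.2 < p.1} := by
      rw [hEeq, ← Measure.map_apply hpair hTset, hmap]
    rw [this, Measure.prod_apply hTset]
    have hsl : ∀ m : ℝ, (Prod.mk m ⁻¹' {p : ℝ × ℝ | p.1/(1+ε) ≤ p.2 ∧ p.2 < p.1})
        = Set.Ico (m/(1+ε)) m := by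
      intro m; ext x; simp [Set.mem_Ico]
    calc ∫⁻ m, ν (Prod.mk m ⁻¹' {p : ℝ × ℝ | p.1/(1+ε) ≤ p.2 ∧ p.2 < p.1}) ∂ρ
        ≤ ∫⁻ _, ENNReal.ofReal (q*ε) ∂ρ := by
          apply lintegral_mono
          intro m
          exact le_trans (le_of_eq (congrArg ν (hsl m))) (hslice m)
      _ = ENNReal.ofReal (q*ε) := by rw [lintegral_const, measure_univ, mul_one]
  -- combine
  have hmain : resProb μ u β' i ≤ resProb μ u β i + ENNReal.ofReal (q*ε) := by
    calc resProb μ u β' i ≤ μ ({ω | β i * u i ω = ⨆ j, β j * u j ω} ∪ E) :=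
          measure_mono hincl
      _ ≤ μ {ω | β i * u i ω = ⨆ j, β j * u j ω} + μ E := measure_union_le _ _
      _ ≤ resProb μ u β i + ENNReal.ofReal (q*ε) := add_le_add le_rfl hEmeas
  have hrne : resProb μ u β i ≠ ⊤ := by rw [resProb]; exact measure_ne_top _ _
  have hfin : resProb μ u β i + ENNReal.ofReal (q*ε) ≠ ⊤ :=
    ENNReal.add_ne_top.mpr ⟨hrne, ENNReal.ofReal_ne_top⟩
  calc (resProb μ u β' i).toReal
      ≤ (resProb μ u β i + ENNReal.ofReal (q*ε)).toReal := ENNReal.toReal_mono hfin hmain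
    _ = (resProb μ u β i).toReal + q*ε := by
        rw [ENNReal.toReal_add hrne ENNReal.ofReal_ne_top,
          ENNReal.toReal_ofReal (by positivity)]
    _ ≤ (resProb μ u β i).toReal + 2*q*ε := by nlinarith
end

section
/- Uniqueness of equalizing multipliers up to scaling: if β and β' in ℝ_{>0}^n both satisfy p_i(β) = p_i(β') = 1/n for all i, and the resulting-probability functions satisfy strict local monotonicity (if β'_i/β_i is the strict maximum of the ratios β'_j/β_j over some j with p_j > 0, then p_i(β') > p_i(β)), then β' = c·β for some c > 0. -/
open MeasureTheory ProbabilityTheory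

theorem stmt11 {Ω : Type*} [MeasurableSpace Ω] (μ : Measure Ω) [IsProbabilityMeasure μ]
    {n : ℕ} (hn : 0 < n) (u : Fin n → Ω → ℝ) (hmeas : ∀ i, Measurable (u i))
    (hindep : iIndepFun u μ)
    (hrange : ∀ i ω, u i ω ∈ Set.Icc (0:ℝ) 1)
    (hatom : ∀ i (r : ℝ), μ {ω | u i ω = r} = 0)
    (hmono : ∀ (γ γ' : Fin n → ℝ) (i : Fin n), (∀ j, 0 < γ j) → (∀ j, 0 < γ' j) →
      (∀ j, γ' j / γ j ≤ γ' i / γ i) →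
      (∃ k, 0 < resProb μ u γ k ∧ γ' k / γ k < γ' i / γ i) →
      resProb μ u γ i < resProb μ u γ' i)
    (β β' : Fin n → ℝ) (hβ : ∀ j, 0 < β j) (hβ' : ∀ j, 0 < β' j)
    (heq : ∀ i, resProb μ u β i = (n : ENNReal)⁻¹)
    (heq' : ∀ i, resProb μ u β' i = (n : ENNReal)⁻¹) :
    ∃ c : ℝ, 0 < c ∧ ∀ i, β' i = c * β i := by
  haveI : Nonempty (Fin n) := ⟨⟨0, hn⟩⟩
  obtain ⟨i, hi⟩ := Finite.exists_max (fun j => β' j / β j)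
  refine ⟨β' i / β i, div_pos (hβ' i) (hβ i), fun j => ?_⟩
  by_contra h
  have hlt : β' j / β j < β' i / β i := by
    refine lt_of_le_of_ne (hi j) (fun he => h ?_)
    rw [← he, div_mul_cancel₀ _ (hβ j).ne']
  have hk : (0 : ENNReal) < resProb μ u β j := by
    rw [heq j]
    simp [ENNReal.inv_pos]
  have := hmono β β' i hβ hβ' hi ⟨j, hk, hlt⟩
  rw [heq i, heq' i] at this
  exact lt_irrefl _ this
end

section
/- Step guarantee: let z ∈ ℤ^n, ε > 0, S ⊆ N, and let β = (1+ε)^z (componentwise) and β' = (1+ε)^{z+1_S}. Assume each agent's utility density is bounded above by q. Then for all i ∈ S: p_i(β) ≤ p_i(β') ≤ p_i(β) + 2qε, and for all i ∉ S: p_i(β) − 2qε ≤ p_i(β') ≤ p_i(β). -/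
open MeasureTheory ProbabilityTheory

-- event rewrite
lemma aux_event_eq {Ω : Type*} {n : ℕ} (u : Fin n → Ω → ℝ) (γ : Fin n → ℝ) (i : Fin n) :
    {ω | γ i * u i ω = ⨆ j, γ j * u j ω} = {ω | ∀ j, γ j * u j ω ≤ γ i * u i ω} := by
  haveI : Nonempty (Fin n) := ⟨i⟩
  ext ω
  have hbdd : BddAbove (Set.range fun j => γ j * u j ω) := (Set.finite_range _).bddAbove
  constructor
  · intro h j
    rw [Set.mem_setOf_eq] at h
    rw [h]
    exact le_ciSup hbdd j
  · intro h
    exact le_antisymm (le_ciSup hbdd i) (ciSup_le h)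

-- slice bound
lemma aux_slice {Ω : Type*} [MeasurableSpace Ω] (μ : Measure Ω) (X : Ω → ℝ)
    (hrange : ∀ ω, X ω ∈ Set.Icc (0:ℝ) 1) (hatom : ∀ r : ℝ, μ {ω | X ω = r} = 0)
    {q : ℝ} (hq : 0 < q) (hpdf : PDFBoundedAbove μ X q) {a b ε : ℝ}
    (ha : 0 ≤ a) (hab : a ≤ b) (hb : b ≤ (1+ε)*a) (hε : 0 < ε) :
    μ {ω | a ≤ X ω ∧ X ω ≤ b} ≤ ENNReal.ofReal (q * ε) := by
  set c := min a 1 with hc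
  set d := min b 1 with hd
  have hcd : c ≤ d := min_le_min hab le_rfl
  have hdce : d - c ≤ ε := by
    rcases le_or_gt a 1 with h1 | h1
    · have : c = a := min_eq_left h1
      rw [this]
      have : d ≤ b := min_le_left _ _
      nlinarith [min_le_right b 1]
    · have hca : c = 1 := min_eq_right h1.le
      have hdb : d = 1 := min_eq_right (by linarith)
      rw [hca, hdb]; linarith
  have hsub : {ω | a ≤ X ω ∧ X ω ≤ b} ⊆ {ω | X ω = c} ∪ {ω | X ω ∈ Set.Ioc c d} := by
    intro ω ⟨h1, h2⟩
    have hx0 := (hrange ω).1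
    have hx1 := (hrange ω).2
    have hxc : c ≤ X ω := (min_le_left a 1).trans h1
    have hxd : X ω ≤ d := le_min h2 hx1
    rcases eq_or_lt_of_le hxc with h | h
    · exact Or.inl h.symm
    · exact Or.inr ⟨h, hxd⟩
  calc μ {ω | a ≤ X ω ∧ X ω ≤ b} ≤ μ ({ω | X ω = c} ∪ {ω | X ω ∈ Set.Ioc c d}) := measure_mono hsub
    _ ≤ μ {ω | X ω = c} + μ {ω | X ω ∈ Set.Ioc c d} := measure_union_le _ _
    _ = μ {ω | X ω ∈ Set.Ioc c d} := by rw [hatom c, zero_add]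
    _ ≤ ENNReal.ofReal (q * (d - c)) := hpdf c d hcd
    _ ≤ ENNReal.ofReal (q * ε) := ENNReal.ofReal_le_ofReal (by nlinarith)

-- pair / Fubini bound
lemma aux_pair {Ω : Type*} [MeasurableSpace Ω] (μ : Measure Ω) [IsProbabilityMeasure μ]
    (X Y : Ω → ℝ) (hX : Measurable X) (hY : Measurable Y)
    (hind : IndepFun Y X μ)
    (hrange : ∀ ω, X ω ∈ Set.Icc (0:ℝ) 1) (hatom : ∀ r : ℝ, μ {ω | X ω = r} = 0)
    {q : ℝ} (hq : 0 < q) (hpdf : PDFBoundedAbove μ X q)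
    {b c d ε : ℝ} (hb : 0 < b) (hc : 0 < c) (hcd : c ≤ d) (hd : d ≤ (1+ε)*c) (hε : 0 < ε) :
    μ {ω | c * Y ω ≤ b * X ω ∧ b * X ω ≤ d * Y ω} ≤ ENNReal.ofReal (q * ε) := by
  have hF : MeasurableSet {p : ℝ × ℝ | c * p.1 ≤ b * p.2 ∧ b * p.2 ≤ d * p.1} := by
    apply MeasurableSet.inter
    · exact measurableSet_le (measurable_fst.const_mul c) (measurable_snd.const_mul b)
    · exact measurableSet_le (measurable_snd.const_mul b) (measurable_fst.const_mul d)
  have hmap : μ.map (fun ω => (Y ω, X ω)) = (μ.map Y).prod (μ.map X) :=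
    (indepFun_iff_map_prod_eq_prod_map_map hY.aemeasurable hX.aemeasurable).mp hind
  have hset : {ω | c * Y ω ≤ b * X ω ∧ b * X ω ≤ d * Y ω}
      = (fun ω => (Y ω, X ω)) ⁻¹' {p : ℝ × ℝ | c * p.1 ≤ b * p.2 ∧ b * p.2 ≤ d * p.1} := rfl
  rw [hset, ← Measure.map_apply (hY.prodMk hX) hF, hmap,
    Measure.prod_apply hF]
  have hslice : ∀ t : ℝ, (μ.map X) (Prod.mk t ⁻¹' {p : ℝ × ℝ | c * p.1 ≤ b * p.2 ∧ b * p.2 ≤ d * p.1})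
      ≤ ENNReal.ofReal (q * ε) := by
    intro t
    have hpre : Prod.mk t ⁻¹' {p : ℝ × ℝ | c * p.1 ≤ b * p.2 ∧ b * p.2 ≤ d * p.1}
        = {x : ℝ | c * t ≤ b * x ∧ b * x ≤ d * t} := rfl
    rw [hpre, Measure.map_apply hX (by
      exact MeasurableSet.inter (measurableSet_le measurable_const (measurable_id.const_mul b))
        (measurableSet_le (measurable_id.const_mul b) measurable_const))]
    rcases lt_or_ge t 0 with ht | ht
    · have : X ⁻¹' {x : ℝ | c * t ≤ b * x ∧ b * x ≤ d * t} = ∅ := by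
        ext ω
        simp only [Set.mem_preimage, Set.mem_setOf_eq, Set.mem_empty_iff_false, iff_false,
          not_and]
        intro _
        have := (hrange ω).1
        nlinarith
      rw [this]; simp
    · have heq : X ⁻¹' {x : ℝ | c * t ≤ b * x ∧ b * x ≤ d * t}
          = {ω | c * t / b ≤ X ω ∧ X ω ≤ d * t / b} := by
        ext ω
        simp only [Set.mem_preimage, Set.mem_setOf_eq]
        rw [div_le_iff₀ hb, le_div_iff₀ hb]
        constructor
        · rintro ⟨h1, h2⟩; exact ⟨by linarith, by linarith⟩
        · rintro ⟨h1, h2⟩; exact ⟨by linarith, by linarith⟩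
      rw [heq]
      apply aux_slice μ X hrange hatom hq hpdf
      · positivity
      · gcongr
      · rw [div_le_iff₀ hb]
        have : (1 + ε) * (c * t / b) * b = (1+ε) * c * t := by field_simp
        rw [this]
        nlinarith
      · exact hε
  calc ∫⁻ t, (μ.map X) (Prod.mk t ⁻¹' {p : ℝ × ℝ | c * p.1 ≤ b * p.2 ∧ b * p.2 ≤ d * p.1}) ∂(μ.map Y)
      ≤ ∫⁻ _, ENNReal.ofReal (q * ε) ∂(μ.map Y) := lintegral_mono hslice
    _ = ENNReal.ofReal (q * ε) := by
        have : IsProbabilityMeasure (μ.map Y) := Measure.isProbabilityMeasure_map hY.aemeasurable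
        simp

-- monotonicity inclusion
lemma aux_mono {Ω : Type*} {n : ℕ} (u : Fin n → Ω → ℝ) (hu : ∀ j ω, 0 ≤ u j ω)
    (γ γ' : Fin n → ℝ) (hγ : ∀ j, 0 < γ j) (hγ' : ∀ j, 0 < γ' j) (i : Fin n)
    (h : ∀ j, γ i * γ' j ≤ γ' i * γ j) :
    {ω | ∀ j, γ j * u j ω ≤ γ i * u i ω} ⊆ {ω | ∀ j, γ' j * u j ω ≤ γ' i * u i ω} := by
  intro ω hω j
  have h1 := hω j
  have h2 := h j
  have hui := hu i ω
  have huj := hu j ω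
  have hγj := hγ j
  have hγ'j := hγ' j
  have hγi := hγ i
  have hγ'i := hγ' i
  have key : γ j * (γ' j * u j ω) ≤ γ j * (γ' i * u i ω) := by
    calc γ j * (γ' j * u j ω) = γ' j * (γ j * u j ω) := by ring
      _ ≤ γ' j * (γ i * u i ω) := by nlinarith
      _ = (γ i * γ' j) * u i ω := by ring
      _ ≤ (γ' i * γ j) * u i ω := by nlinarith
      _ = γ j * (γ' i * u i ω) := by ring
  exact le_of_mul_le_mul_left key hγj

-- bound on the difference of events
lemma aux_diff {Ω : Type*} [MeasurableSpace Ω] (μ : Measure Ω) [IsProbabilityMeasure μ]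
    {n : ℕ} (u : Fin n → Ω → ℝ) (hmeas : ∀ i, Measurable (u i))
    (hindep : iIndepFun u μ)
    (hrange : ∀ i ω, u i ω ∈ Set.Icc (0:ℝ) 1)
    (hatom : ∀ i (r : ℝ), μ {ω | u i ω = r} = 0)
    {q ε : ℝ} (hq : 0 < q) (hε : 0 < ε)
    (hpdf : ∀ i, PDFBoundedAbove μ (u i) q)
    (γ γ' : Fin n → ℝ) (hγ : ∀ j, 0 < γ j) (hγ' : ∀ j, 0 < γ' j) (i : Fin n)
    (h : ∀ j, γ' i * γ j ≤ (1+ε) * (γ i * γ' j)) :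
    μ ({ω | ∀ j, γ' j * u j ω ≤ γ' i * u i ω} \ {ω | ∀ j, γ j * u j ω ≤ γ i * u i ω})
      ≤ ENNReal.ofReal (q * ε) := by
  by_cases hall : ∀ j : Fin n, j = i
  · have : ({ω | ∀ j, γ' j * u j ω ≤ γ' i * u i ω} \ {ω | ∀ j, γ j * u j ω ≤ γ i * u i ω})
        = (∅ : Set Ω) := by
      ext ω
      simp only [Set.mem_diff, Set.mem_setOf_eq, Set.mem_empty_iff_false, iff_false, not_and,
        not_not]
      intro _ j
      rw [hall j]
    rw [this]
    simp
  · push_neg at hall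
    obtain ⟨j₀, hj₀⟩ := hall
    haveI : Nonempty (({i}ᶜ : Finset (Fin n)) : Type _) :=
      ⟨⟨j₀, by simp [hj₀]⟩⟩
    set M : Ω → ℝ := fun ω => ⨆ j : (({i}ᶜ : Finset (Fin n)) : Type _), γ j.1 * u j.1 ω with hM
    have hMmeas : Measurable M :=
      Measurable.iSup fun j => (hmeas j.1).const_mul (γ j.1)
    have hεpos : (0:ℝ) < 1 + ε := by linarith
    -- independence of M and u i
    have hind : IndepFun M (u i) μ := by
      have h0 := hindep.indepFun_finset ({i}ᶜ : Finset (Fin n)) {i} disjoint_compl_left hmeas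
      have hφ : Measurable (fun g : (({i}ᶜ : Finset (Fin n)) : Type _) → ℝ =>
          ⨆ j : (({i}ᶜ : Finset (Fin n)) : Type _), γ j.1 * g j) :=
        Measurable.iSup fun j => Measurable.const_mul (measurable_pi_apply _) _
      have hψ : Measurable (fun g : (({i} : Finset (Fin n)) : Type _) → ℝ =>
          g ⟨i, Finset.mem_singleton_self i⟩) := measurable_pi_apply _
      exact h0.comp hφ hψ
    -- inclusion of the difference into the band event
    have hsub : ({ω | ∀ j, γ' j * u j ω ≤ γ' i * u i ω} \ {ω | ∀ j, γ j * u j ω ≤ γ i * u i ω})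
        ⊆ {ω | 1 * M ω ≤ ((1+ε) * γ i) * u i ω ∧ ((1+ε) * γ i) * u i ω ≤ (1+ε) * M ω} := by
      rintro ω ⟨h1, h2⟩
      simp only [Set.mem_setOf_eq] at h1 h2 ⊢
      push_neg at h2
      obtain ⟨k, hk⟩ := h2
      have hki : k ≠ i := by
        intro hcon; rw [hcon] at hk; exact lt_irrefl _ hk
      have hbdd : BddAbove (Set.range fun j : (({i}ᶜ : Finset (Fin n)) : Type _) =>
          γ j.1 * u j.1 ω) := (Set.finite_range _).bddAbove
      constructor
      · -- M ω ≤ (1+ε) * γ i * u i ω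
        rw [one_mul]
        apply ciSup_le
        intro j
        have hj := h1 j.1
        have hui := (hrange i ω).1
        have huj := (hrange j.1 ω).1
        have hh := h j.1
        have hγ'i := hγ' i
        have hγ'j := hγ' j.1
        have hγi := hγ i
        have hγj := hγ j.1
        -- γ' i * (γ j * u j) ≤ (1+ε) γ i γ' j u j ≤ (1+ε) γ i (γ' i * u i)
        have key : γ' i * (γ j.1 * u j.1 ω) ≤ γ' i * ((1+ε) * γ i * u i ω) := by
          calc γ' i * (γ j.1 * u j.1 ω) = (γ' i * γ j.1) * u j.1 ω := by ring
            _ ≤ ((1+ε) * (γ i * γ' j.1)) * u j.1 ω := by nlinarith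
            _ = ((1+ε) * γ i) * (γ' j.1 * u j.1 ω) := by ring
            _ ≤ ((1+ε) * γ i) * (γ' i * u i ω) :=
                mul_le_mul_of_nonneg_left hj (by positivity)
            _ = γ' i * ((1+ε) * γ i * u i ω) := by ring
        have := le_of_mul_le_mul_left key (hγ' i)
        linarith
      · -- (1+ε) γ i u i ≤ (1+ε) M
        have hle : γ i * u i ω ≤ M ω := by
          have : γ k * u k ω ≤ M ω := by
            have := le_ciSup hbdd (⟨k, by simp [hki]⟩ : (({i}ᶜ : Finset (Fin n)) : Type _))
            simpa using this
          linarith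
        nlinarith
    calc μ _ ≤ μ {ω | 1 * M ω ≤ ((1+ε) * γ i) * u i ω ∧ ((1+ε) * γ i) * u i ω ≤ (1+ε) * M ω} :=
        measure_mono hsub
      _ ≤ ENNReal.ofReal (q * ε) := by
          apply aux_pair μ (u i) M (hmeas i) hMmeas hind (hrange i) (hatom i) hq (hpdf i)
          · have := hγ i; nlinarith
          · exact one_pos
          · linarith
          · rw [mul_one]
          · exact hε

theorem stmt12 {Ω : Type*} [MeasurableSpace Ω] (μ : Measure Ω) [IsProbabilityMeasure μ]
    {n : ℕ} (hn : 0 < n) (u : Fin n → Ω → ℝ) (hmeas : ∀ i, Measurable (u i))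
    (hindep : iIndepFun u μ)
    (hrange : ∀ i ω, u i ω ∈ Set.Icc (0:ℝ) 1)
    (hatom : ∀ i (r : ℝ), μ {ω | u i ω = r} = 0)
    (q ε : ℝ) (hq : 0 < q) (hε : 0 < ε)
    (hpdf : ∀ i, PDFBoundedAbove μ (u i) q)
    (z : Fin n → ℤ) (S : Finset (Fin n)) :
    (∀ i ∈ S,
        (resProb μ u (fun j => (1+ε) ^ (z j)) i).toReal
          ≤ (resProb μ u (fun j => (1+ε) ^ (z j + if j ∈ S then 1 else 0)) i).toReal ∧
        (resProb μ u (fun j => (1+ε) ^ (z j + if j ∈ S then 1 else 0)) i).toReal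
          ≤ (resProb μ u (fun j => (1+ε) ^ (z j)) i).toReal + 2 * q * ε) ∧
    (∀ i ∉ S,
        (resProb μ u (fun j => (1+ε) ^ (z j)) i).toReal - 2 * q * ε
          ≤ (resProb μ u (fun j => (1+ε) ^ (z j + if j ∈ S then 1 else 0)) i).toReal ∧
        (resProb μ u (fun j => (1+ε) ^ (z j + if j ∈ S then 1 else 0)) i).toReal
          ≤ (resProb μ u (fun j => (1+ε) ^ (z j)) i).toReal) := by
  have hε1 : (0:ℝ) < 1 + ε := by linarith
  have hεne : (1:ℝ) + ε ≠ 0 := ne_of_gt hε1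
  set β : Fin n → ℝ := fun j => (1+ε) ^ (z j) with hβ
  set β' : Fin n → ℝ := fun j => (1+ε) ^ (z j + if j ∈ S then 1 else 0) with hβ'
  have hβpos : ∀ j, 0 < β j := fun j => zpow_pos hε1 _
  have hβ'pos : ∀ j, 0 < β' j := fun j => zpow_pos hε1 _
  have hβ'eq : ∀ j, β' j = if j ∈ S then (1+ε) * β j else β j := by
    intro j
    by_cases hj : j ∈ S
    · simp only [hβ', hβ, hj, if_true]
      rw [zpow_add_one₀ hεne]
      ring
    · simp [hβ', hβ, hj]
  have hu : ∀ j ω, 0 ≤ u j ω := fun j ω => (hrange j ω).1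
  have hres : ∀ (γ : Fin n → ℝ) (i : Fin n),
      resProb μ u γ i = μ {ω | ∀ j, γ j * u j ω ≤ γ i * u i ω} := by
    intro γ i
    rw [resProb, aux_event_eq]
  have hqε : 0 ≤ q * ε := by positivity
  have key : ∀ (γ γ' : Fin n → ℝ), (∀ j, 0 < γ j) → (∀ j, 0 < γ' j) → ∀ i : Fin n,
      (∀ j, γ i * γ' j ≤ γ' i * γ j) → (∀ j, γ' i * γ j ≤ (1+ε) * (γ i * γ' j)) →
      (resProb μ u γ i).toReal ≤ (resProb μ u γ' i).toReal ∧
      (resProb μ u γ' i).toReal ≤ (resProb μ u γ i).toReal + 2 * q * ε := by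
    intro γ γ' hγ hγ' i hc1 hc2
    rw [hres γ i, hres γ' i]
    set E := {ω | ∀ j, γ j * u j ω ≤ γ i * u i ω} with hE
    set E' := {ω | ∀ j, γ' j * u j ω ≤ γ' i * u i ω} with hE'
    have hmono : E ⊆ E' := aux_mono u hu γ γ' hγ hγ' i hc1
    constructor
    · exact ENNReal.toReal_mono (measure_ne_top μ _) (measure_mono hmono)
    · have hdiff : μ (E' \ E) ≤ ENNReal.ofReal (q * ε) :=
        aux_diff μ u hmeas hindep hrange hatom hq hε hpdf γ γ' hγ hγ' i hc2
      have hcover : E' ⊆ E ∪ (E' \ E) := by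
        intro x hx
        by_cases h : x ∈ E
        · exact Or.inl h
        · exact Or.inr ⟨hx, h⟩
      have hsplit : μ E' ≤ μ E + ENNReal.ofReal (q * ε) := by
        calc μ E' ≤ μ (E ∪ (E' \ E)) := measure_mono hcover
          _ ≤ μ E + μ (E' \ E) := measure_union_le _ _
          _ ≤ μ E + ENNReal.ofReal (q * ε) := add_le_add le_rfl hdiff
      have h1 : (μ E').toReal ≤ (μ E + ENNReal.ofReal (q * ε)).toReal :=
        ENNReal.toReal_mono
          (ENNReal.add_ne_top.mpr ⟨measure_ne_top μ _, ENNReal.ofReal_ne_top⟩) hsplit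
      rw [ENNReal.toReal_add (measure_ne_top μ _) ENNReal.ofReal_ne_top,
        ENNReal.toReal_ofReal hqε] at h1
      nlinarith
  constructor
  · intro i hi
    apply key β β' hβpos hβ'pos i
    · intro j
      rw [hβ'eq i, hβ'eq j, if_pos hi]
      by_cases hj : j ∈ S
      · rw [if_pos hj]; nlinarith [mul_pos (hβpos i) (hβpos j), hε, hβpos i, hβpos j, mul_pos (mul_pos hε1 (mul_pos (hβpos i) (hβpos j))) hε]
      · rw [if_neg hj]
        nlinarith [mul_pos (hβpos i) (hβpos j), hε, hβpos i, hβpos j, mul_pos (mul_pos hε1 (mul_pos (hβpos i) (hβpos j))) hε]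
    · intro j
      rw [hβ'eq i, hβ'eq j, if_pos hi]
      by_cases hj : j ∈ S
      · rw [if_pos hj]
        nlinarith [mul_pos (hβpos i) (hβpos j), hε, hβpos i, hβpos j, mul_pos (mul_pos hε1 (mul_pos (hβpos i) (hβpos j))) hε]
      · rw [if_neg hj]
        nlinarith [mul_pos (hβpos i) (hβpos j), hε, hβpos i, hβpos j, mul_pos (mul_pos hε1 (mul_pos (hβpos i) (hβpos j))) hε]
  · intro i hi
    have hk := key β' β hβ'pos hβpos i ?_ ?_
    · exact ⟨by linarith [hk.2], hk.1⟩
    · intro j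
      rw [hβ'eq i, hβ'eq j, if_neg hi]
      by_cases hj : j ∈ S
      · rw [if_pos hj]
        nlinarith [mul_pos (hβpos i) (hβpos j), hε, hβpos i, hβpos j, mul_pos (mul_pos hε1 (mul_pos (hβpos i) (hβpos j))) hε]
      · rw [if_neg hj]
    · intro j
      rw [hβ'eq i, hβ'eq j, if_neg hi]
      by_cases hj : j ∈ S
      · rw [if_pos hj]
        nlinarith [mul_pos (hβpos i) (hβpos j), hε, hβpos i, hβpos j, mul_pos (mul_pos hε1 (mul_pos (hβpos i) (hβpos j))) hε]
      · rw [if_neg hj]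
        nlinarith [mul_pos (hβpos i) (hβpos j), hε, hβpos i, hβpos j, mul_pos (mul_pos hε1 (mul_pos (hβpos i) (hβpos j))) hε]
end

section
/- Conditional expectation upper bound: for agents i ≠ j with independent utilities, E[u_i | β_j u_j = max_k β_k u_k] ≤ E[u_i], assuming the conditioning event has positive probability. -/
open MeasureTheory ProbabilityTheory

/-- For a probability measure on ℝ, `ν (Ioc t c) ≤ ν (Ioi t) * ν (Iic c)`. -/
lemma aux_Ioc_le (ν : Measure ℝ) [IsProbabilityMeasure ν] (t c : ℝ) :
    ν (Set.Ioc t c) ≤ ν (Set.Ioi t) * ν (Set.Iic c) := by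
  by_cases h : t < c
  · have hsplit : ν (Set.Iic t) + ν (Set.Ioc t c) = ν (Set.Iic c) := by
      rw [← measure_union (Set.Iic_disjoint_Ioc le_rfl) measurableSet_Ioc,
        Set.Iic_union_Ioc_eq_Iic h.le]
    have hIoi : ν (Set.Ioi t) = 1 - ν (Set.Iic t) := by
      rw [← Set.compl_Iic, measure_compl measurableSet_Iic (measure_ne_top ν _), measure_univ]
    set b := ν (Set.Iic t)
    set x := ν (Set.Ioc t c)
    have hb : b ≤ 1 := prob_le_one
    have hx : x ≤ 1 - b := ENNReal.le_sub_of_add_le_left (measure_ne_top ν _) (by rw [hsplit]; exact prob_le_one)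
    calc x = x * (b + (1 - b)) := by rw [add_tsub_cancel_of_le hb, mul_one]
      _ = x * b + x * (1 - b) := mul_add _ _ _
      _ ≤ (1 - b) * b + (1 - b) * x :=
          add_le_add (mul_le_mul_left hx b) (le_of_eq (mul_comm x (1 - b)))
      _ = (1 - b) * (b + x) := (mul_add _ _ _).symm
      _ = ν (Set.Ioi t) * ν (Set.Iic c) := by rw [hIoi, hsplit]
  · rw [Set.Ioc_eq_empty h, measure_empty]
    exact zero_le

theorem stmt15 {Ω : Type*} [MeasurableSpace Ω] (μ : Measure Ω) [IsProbabilityMeasure μ]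
    {n : ℕ} (hn : 0 < n) (u : Fin n → Ω → ℝ) (hmeas : ∀ i, Measurable (u i))
    (hindep : iIndepFun u μ)
    (hrange : ∀ i ω, u i ω ∈ Set.Icc (0:ℝ) 1)
    (hatom : ∀ i (r : ℝ), μ {ω | u i ω = r} = 0)
    (β : Fin n → ℝ) (hβ : ∀ j, 0 < β j)
    (i j : Fin n) (hij : i ≠ j)
    (hpos : 0 < μ {ω | β j * u j ω = ⨆ k, β k * u k ω}) :
    condExpEvent μ (u i) {ω | β j * u j ω = ⨆ k, β k * u k ω} ≤ ∫ ω, u i ω ∂μ := by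
  haveI : Nonempty (Fin n) := ⟨⟨0, hn⟩⟩
  set A : Set Ω := {ω | β j * u j ω = ⨆ k, β k * u k ω} with hAdef
  have hAeq : A = {ω | ∀ k, β k * u k ω ≤ β j * u j ω} := by
    ext ω
    simp only [hAdef, Set.mem_setOf_eq]
    constructor
    · intro h k
      rw [h]
      exact le_ciSup (f := fun k => β k * u k ω) (Set.Finite.bddAbove (Set.finite_range _)) k
    · intro h
      exact le_antisymm (le_ciSup (f := fun k => β k * u k ω) (Set.Finite.bddAbove (Set.finite_range _)) j) (ciSup_le h)
  -- independence setup
  have hji : j ∈ ({i}ᶜ : Finset (Fin n)) := by simp [hij.symm]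
  set X : Ω → ℝ := u i with hXdef
  set W : Ω → (({i}ᶜ : Finset (Fin n)) → ℝ) := fun a k => u k a with hWdef
  have hX : Measurable X := hmeas i
  have hW : Measurable W := measurable_pi_lambda _ fun k => hmeas k
  have hXW : IndepFun X W μ := by
    have hind := hindep.indepFun_finset {i} ({i}ᶜ) disjoint_compl_right hmeas
    have h2 := hind.comp
      (φ := fun v : (({i} : Finset (Fin n)) → ℝ) => v ⟨i, Finset.mem_singleton_self i⟩)
      (ψ := id) (measurable_pi_apply (X := fun _ : ({i} : Finset (Fin n)) => ℝ) ⟨i, Finset.mem_singleton_self i⟩) measurable_id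
    exact h2
  have hWX := hXW.symm
  set ν := μ.map X with hνdef
  set ρ := μ.map W with hρdef
  haveI : IsProbabilityMeasure ν := Measure.isProbabilityMeasure_map hX.aemeasurable
  haveI : IsProbabilityMeasure ρ := Measure.isProbabilityMeasure_map hW.aemeasurable
  have hmap : μ.map (fun ω => (W ω, X ω)) = ρ.prod ν :=
    (indepFun_iff_map_prod_eq_prod_map_map hW.aemeasurable hX.aemeasurable).mp hWX
  set jj : {k // k ∈ ({i}ᶜ : Finset (Fin n))} := ⟨j, hji⟩ with hjjdef
  set c : (({i}ᶜ : Finset (Fin n)) → ℝ) → ℝ := fun w => β j * w jj / β i with hcdef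
  set B' : Set (({i}ᶜ : Finset (Fin n)) → ℝ) :=
    {w | ∀ k : {x // x ∈ ({i}ᶜ : Finset (Fin n))}, β k.1 * w k ≤ β j * w jj} with hB'def
  have hB' : MeasurableSet B' := by
    have : B' = ⋂ k : {x // x ∈ ({i}ᶜ : Finset (Fin n))}, {w | β k.1 * w k ≤ β j * w jj} := by
      ext w; simp [hB'def]
    rw [this]
    exact MeasurableSet.iInter fun k =>
      measurableSet_le ((measurable_pi_apply k).const_mul _) ((measurable_pi_apply jj).const_mul _)
  have hxc : ∀ (x r : ℝ), β i * x ≤ r ↔ x ≤ r / β i := by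
    intro x r
    rw [le_div_iff₀ (hβ i), mul_comm]
  -- the key computation
  have hcompute : ∀ (T : Set ℝ), MeasurableSet T →
      μ (A ∩ {ω | X ω ∈ T}) = ∫⁻ w in B', ν (Set.Iic (c w) ∩ T) ∂ρ := by
    intro T hT
    set S : Set ((({i}ᶜ : Finset (Fin n)) → ℝ) × ℝ) :=
      {p | p.1 ∈ B' ∧ β i * p.2 ≤ β j * p.1 jj ∧ p.2 ∈ T} with hSdef
    have hS : MeasurableSet S := by
      apply MeasurableSet.inter (hB'.preimage measurable_fst)
      exact (measurableSet_le (measurable_snd.const_mul _)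
        (((measurable_pi_apply jj).comp measurable_fst).const_mul _)).inter
        (hT.preimage measurable_snd)
    have hpre : A ∩ {ω | X ω ∈ T} = (fun ω => (W ω, X ω)) ⁻¹' S := by
      rw [hAeq]
      ext ω
      simp only [Set.mem_inter_iff, Set.mem_setOf_eq, Set.mem_preimage, hSdef, hB'def, hWdef,
        hXdef, hjjdef]
      constructor
      · rintro ⟨h, hTm⟩
        exact ⟨fun k => h k, h i, hTm⟩
      · rintro ⟨h1, h2, hTm⟩
        refine ⟨fun k => ?_, hTm⟩
        by_cases hk : k = i
        · subst hk; exact h2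
        · exact h1 ⟨k, by simp [hk]⟩
    have hslice : ∀ w, ν (Prod.mk w ⁻¹' S) =
        Set.indicator B' (fun w => ν (Set.Iic (c w) ∩ T)) w := by
      intro w
      by_cases hw : w ∈ B'
      · rw [Set.indicator_of_mem hw]
        congr 1
        ext x
        simp only [Set.mem_preimage, hSdef, Set.mem_setOf_eq, Set.mem_inter_iff, Set.mem_Iic]
        rw [hxc]
        tauto
      · rw [Set.indicator_of_notMem hw]
        have : Prod.mk w ⁻¹' S = ∅ := by
          ext x
          simp only [Set.mem_preimage, hSdef, Set.mem_setOf_eq, Set.mem_empty_iff_false,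
            iff_false]
          tauto
        rw [this, measure_empty]
    rw [hpre, ← Measure.map_apply (hW.prodMk hX) hS, hmap, Measure.prod_apply hS]
    rw [lintegral_congr hslice, lintegral_indicator hB' _]
  have key : ∀ t : ℝ, μ (A ∩ {ω | t < X ω}) ≤ μ {ω | t < X ω} * μ A := by
    intro t
    have h1 : μ (A ∩ {ω | t < X ω}) = ∫⁻ w in B', ν (Set.Iic (c w) ∩ Set.Ioi t) ∂ρ :=
      hcompute (Set.Ioi t) measurableSet_Ioi
    have h2 : μ A = ∫⁻ w in B', ν (Set.Iic (c w)) ∂ρ := by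
      have := hcompute Set.univ MeasurableSet.univ
      simpa using this
    have h3 : μ {ω | t < X ω} = ν (Set.Ioi t) :=
      (Measure.map_apply hX measurableSet_Ioi).symm
    rw [h1, h2, h3]
    calc ∫⁻ w in B', ν (Set.Iic (c w) ∩ Set.Ioi t) ∂ρ
        ≤ ∫⁻ w in B', ν (Set.Ioi t) * ν (Set.Iic (c w)) ∂ρ := by
          apply lintegral_mono
          intro w
          dsimp only
          have heq : Set.Iic (c w) ∩ Set.Ioi t = Set.Ioc t (c w) := by
            ext x
            simp only [Set.mem_inter_iff, Set.mem_Iic, Set.mem_Ioi, Set.mem_Ioc]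
            tauto
          rw [heq]
          exact aux_Ioc_le ν t (c w)
      _ = ν (Set.Ioi t) * ∫⁻ w in B', ν (Set.Iic (c w)) ∂ρ :=
          lintegral_const_mul' _ _ (measure_ne_top ν _)
  -- layer cake assembly
  have hnn : 0 ≤ᵐ[μ] X := Filter.Eventually.of_forall fun ω => (hrange i ω).1
  set L1 := ∫⁻ ω in A, ENNReal.ofReal (X ω) ∂μ with hL1def
  set L2 := ∫⁻ ω, ENNReal.ofReal (X ω) ∂μ with hL2def
  have hL2le : L2 ≤ 1 := by
    calc L2 ≤ ∫⁻ _, 1 ∂μ :=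
          lintegral_mono fun ω => ENNReal.ofReal_le_one.mpr (hrange i ω).2
      _ = 1 := by simp
  have hL2ne : L2 ≠ ⊤ := (hL2le.trans_lt ENNReal.one_lt_top).ne
  have hL1le : L1 ≤ L2 * μ A := by
    rw [hL1def, hL2def,
      lintegral_eq_lintegral_meas_lt (μ.restrict A) (ae_restrict_of_ae hnn)
        (hX.aemeasurable.restrict),
      lintegral_eq_lintegral_meas_lt μ hnn hX.aemeasurable]
    calc ∫⁻ t in Set.Ioi 0, (μ.restrict A) {a | t < X a}
        ≤ ∫⁻ t in Set.Ioi 0, μ {a | t < X a} * μ A := by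
          apply lintegral_mono
          intro t
          dsimp only
          rw [Measure.restrict_apply (by exact hX measurableSet_Ioi), Set.inter_comm]
          exact key t
      _ = (∫⁻ t in Set.Ioi 0, μ {a | t < X a}) * μ A :=
          lintegral_mul_const' _ _ (measure_ne_top μ A)
  have hIntA : ∫ ω in A, X ω ∂μ = L1.toReal :=
    integral_eq_lintegral_of_nonneg_ae (ae_restrict_of_ae hnn) hX.aestronglyMeasurable.restrict
  have hInt : ∫ ω, X ω ∂μ = L2.toReal :=
    integral_eq_lintegral_of_nonneg_ae hnn hX.aestronglyMeasurable
  have hfin : L2 * μ A ≠ ⊤ := ENNReal.mul_ne_top hL2ne (measure_ne_top μ A)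
  have h1 : L1.toReal ≤ (L2 * μ A).toReal := ENNReal.toReal_mono hfin hL1le
  rw [ENNReal.toReal_mul] at h1
  have hApos : 0 < (μ A).toReal := ENNReal.toReal_pos hpos.ne' (measure_ne_top μ A)
  unfold condExpEvent
  rw [hIntA, hInt]
  
  calc (μ A).toReal⁻¹ * L1.toReal
      ≤ (μ A).toReal⁻¹ * (L2.toReal * (μ A).toReal) := by
        apply mul_le_mul_of_nonneg_left h1 (inv_nonneg.mpr hApos.le)
    _ = L2.toReal := by
        field_simp
end

section
/- Conditional expectation lower bound: for agents i ≠ j with independent utilities, E[u_i | β_i u_i = max_k β_k u_k] ≥ E[u_i | β_i u_i ≥ β_j u_j], assuming both conditioning events have positive probability. -/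
open MeasureTheory ProbabilityTheory

lemma measurable_dsup' {ι δ : Type*} [MeasurableSpace δ] (s : Finset ι) (f : ι → δ → ℝ)
    (hf : ∀ k, Measurable (f k)) :
    Measurable (fun x => if h : s.Nonempty then s.sup' h (fun k => f k x) else -1) := by
  by_cases h : s.Nonempty
  · simp only [dif_pos h]
    have he : (fun x => s.sup' h (fun k => f k x)) = s.sup' h f := by
      funext x; rw [Finset.sup'_apply]
    rw [he]
    exact Finset.measurable_sup' h (fun k _ => hf k)
  · simp only [dif_neg h]; exact measurable_const

section helpers

variable {α : Type*} [MeasurableSpace α]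

lemma integrable_of_bdd (m : Measure α) [IsFiniteMeasure m] {f : α → ℝ}
    (hf : Measurable f) {C : ℝ} (h : ∀ x, |f x| ≤ C) : Integrable f m :=
  ⟨hf.aestronglyMeasurable,
    HasFiniteIntegral.of_bounded (Filter.Eventually.of_forall
      (by simpa [Real.norm_eq_abs] using h))⟩

lemma cheb (m : Measure ℝ) [IsProbabilityMeasure m] (f g w : ℝ → ℝ)
    (hf : Monotone f) (hg : Monotone g) (hwm : Measurable w)
    (hw0 : ∀ x, 0 ≤ w x)
    (hbf : ∀ x, |f x| ≤ 1) (hbg : ∀ x, |g x| ≤ 1) (hbw : ∀ x, |w x| ≤ 1) :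
    (∫ x, f x * w x ∂m) * (∫ x, g x * w x ∂m) ≤
      (∫ x, f x * g x * w x ∂m) * (∫ x, w x ∂m) := by
  have hfm := hf.measurable
  have hgm := hg.measurable
  have hb2 : ∀ (a b : ℝ → ℝ), (∀ x, |a x| ≤ 1) → (∀ x, |b x| ≤ 1) →
      ∀ x, |a x * b x| ≤ 1 := by
    intro a b ha hb x
    rw [abs_mul]
    exact mul_le_one₀ (ha x) (abs_nonneg _) (hb x)
  have hfgw : ∀ x, |f x * g x * w x| ≤ 1 := hb2 _ _ (hb2 _ _ hbf hbg) hbw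
  have hfw : ∀ x, |f x * w x| ≤ 1 := hb2 _ _ hbf hbw
  have hgw : ∀ x, |g x * w x| ≤ 1 := hb2 _ _ hbg hbw
  have hint : ∀ (a b : ℝ → ℝ), Measurable a → Measurable b →
      (∀ x, |a x| ≤ 1) → (∀ x, |b x| ≤ 1) →
      Integrable (fun p : ℝ × ℝ => a p.1 * b p.2) (m.prod m) := by
    intro a b ha hb hba hbb
    refine integrable_of_bdd (C := 1) _
      ((ha.comp measurable_fst).mul (hb.comp measurable_snd)) ?_
    intro p
    rw [abs_mul]
    exact mul_le_one₀ (hba _) (abs_nonneg _) (hbb _)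
  have i1 : Integrable (fun p : ℝ × ℝ => f p.1 * g p.1 * w p.1 * w p.2) (m.prod m) :=
    hint _ _ ((hfm.mul hgm).mul hwm) hwm hfgw hbw
  have i2 : Integrable (fun p : ℝ × ℝ => w p.1 * (f p.2 * g p.2 * w p.2)) (m.prod m) :=
    hint _ _ hwm ((hfm.mul hgm).mul hwm) hbw hfgw
  have i3 : Integrable (fun p : ℝ × ℝ => f p.1 * w p.1 * (g p.2 * w p.2)) (m.prod m) :=
    hint _ _ (hfm.mul hwm) (hgm.mul hwm) hfw hgw
  have i4 : Integrable (fun p : ℝ × ℝ => g p.1 * w p.1 * (f p.2 * w p.2)) (m.prod m) :=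
    hint _ _ (hgm.mul hwm) (hfm.mul hwm) hgw hfw
  have i12 : Integrable (fun p : ℝ × ℝ =>
      f p.1 * g p.1 * w p.1 * w p.2 + w p.1 * (f p.2 * g p.2 * w p.2)) (m.prod m) := i1.add i2
  have i34 : Integrable (fun p : ℝ × ℝ =>
      f p.1 * w p.1 * (g p.2 * w p.2) + g p.1 * w p.1 * (f p.2 * w p.2)) (m.prod m) := i3.add i4
  have e1 : ∫ p : ℝ × ℝ, f p.1 * g p.1 * w p.1 * w p.2 ∂(m.prod m)
      = (∫ x, f x * g x * w x ∂m) * (∫ x, w x ∂m) :=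
    integral_prod_mul (L := ℝ) (fun x => f x * g x * w x) w
  have e2 : ∫ p : ℝ × ℝ, w p.1 * (f p.2 * g p.2 * w p.2) ∂(m.prod m)
      = (∫ x, w x ∂m) * (∫ x, f x * g x * w x ∂m) :=
    integral_prod_mul (L := ℝ) w (fun x => f x * g x * w x)
  have e3 : ∫ p : ℝ × ℝ, f p.1 * w p.1 * (g p.2 * w p.2) ∂(m.prod m)
      = (∫ x, f x * w x ∂m) * (∫ x, g x * w x ∂m) :=
    integral_prod_mul (L := ℝ) (fun x => f x * w x) (fun x => g x * w x)
  have e4 : ∫ p : ℝ × ℝ, g p.1 * w p.1 * (f p.2 * w p.2) ∂(m.prod m)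
      = (∫ x, g x * w x ∂m) * (∫ x, f x * w x ∂m) :=
    integral_prod_mul (L := ℝ) (fun x => g x * w x) (fun x => f x * w x)
  have h0 : 0 ≤ ∫ p : ℝ × ℝ,
      ((f p.1 * g p.1 * w p.1 * w p.2 + w p.1 * (f p.2 * g p.2 * w p.2))
        - (f p.1 * w p.1 * (g p.2 * w p.2) + g p.1 * w p.1 * (f p.2 * w p.2))) ∂(m.prod m) := by
    apply integral_nonneg
    intro p
    have hkey : 0 ≤ (f p.1 - f p.2) * (g p.1 - g p.2) * (w p.1 * w p.2) := by
      apply mul_nonneg _ (mul_nonneg (hw0 _) (hw0 _))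
      rcases le_total p.1 p.2 with h | h
      · have h1 := mul_nonneg (neg_nonneg.2 (sub_nonpos.2 (hf h)))
          (neg_nonneg.2 (sub_nonpos.2 (hg h)))
        rwa [neg_mul_neg] at h1
      · exact mul_nonneg (sub_nonneg.2 (hf h)) (sub_nonneg.2 (hg h))
    have heq : (f p.1 - f p.2) * (g p.1 - g p.2) * (w p.1 * w p.2)
        = (f p.1 * g p.1 * w p.1 * w p.2 + w p.1 * (f p.2 * g p.2 * w p.2))
          - (f p.1 * w p.1 * (g p.2 * w p.2) + g p.1 * w p.1 * (f p.2 * w p.2)) := by ring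
    rw [heq] at hkey
    exact hkey
  rw [integral_sub i12 i34, integral_add i1 i2, integral_add i3 i4, e1, e2, e3, e4] at h0
  linarith

lemma indep_int {Ω γ : Type*} [MeasurableSpace Ω] [MeasurableSpace γ]
    (μ : Measure Ω) [IsProbabilityMeasure μ]
    {X : Ω → ℝ} {W : Ω → γ} (hX : Measurable X) (hW : Measurable W)
    (h : IndepFun X W μ) (F : ℝ × γ → ℝ) (hF : Measurable F) {C : ℝ}
    (hC : ∀ p, |F p| ≤ C) :
    ∫ ω, F (X ω, W ω) ∂μ = ∫ x, ∫ w, F (x, w) ∂(μ.map W) ∂(μ.map X) := by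
  have hmap := (indepFun_iff_map_prod_eq_prod_map_map hX.aemeasurable hW.aemeasurable).mp h
  haveI : IsProbabilityMeasure (μ.map X) := Measure.isProbabilityMeasure_map hX.aemeasurable
  haveI : IsProbabilityMeasure (μ.map W) := Measure.isProbabilityMeasure_map hW.aemeasurable
  have h1 : ∫ ω, F (X ω, W ω) ∂μ = ∫ p, F p ∂(μ.map (fun ω => (X ω, W ω))) :=
    (integral_map (hX.aemeasurable.prodMk hW.aemeasurable) hF.aestronglyMeasurable).symm
  rw [h1, hmap]
  exact integral_prod F (integrable_of_bdd _ hF hC)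

end helpers


theorem stmt16 {Ω : Type*} [MeasurableSpace Ω] (μ : Measure Ω) [IsProbabilityMeasure μ]
    {n : ℕ} (hn : 0 < n) (u : Fin n → Ω → ℝ) (hmeas : ∀ i, Measurable (u i))
    (hindep : iIndepFun u μ)
    (hrange : ∀ i ω, u i ω ∈ Set.Icc (0:ℝ) 1)
    (hatom : ∀ i (r : ℝ), μ {ω | u i ω = r} = 0)
    (β : Fin n → ℝ) (hβ : ∀ j, 0 < β j)
    (i j : Fin n) (hij : i ≠ j)
    (hpos1 : 0 < μ {ω | β i * u i ω = ⨆ k, β k * u k ω})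
    (hpos2 : 0 < μ {ω | β j * u j ω ≤ β i * u i ω}) :
    condExpEvent μ (u i) {ω | β j * u j ω ≤ β i * u i ω}
      ≤ condExpEvent μ (u i) {ω | β i * u i ω = ⨆ k, β k * u k ω} := by
  classical
  haveI : Nonempty (Fin n) := ⟨i⟩
  set s : Finset (Fin n) := (Finset.univ.erase i).erase j with hs
  have hmem_s : ∀ k, k ∈ s ↔ (k ≠ j ∧ k ≠ i) := by
    intro k; simp [hs, Finset.mem_erase]
  set X : Ω → ℝ := fun ω => β i * u i ω with hXdef
  set Y : Ω → ℝ := fun ω => β j * u j ω with hYdef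
  set V : Ω → ℝ := fun ω =>
    if h : s.attach.Nonempty then s.attach.sup' h (fun k => β k * u k ω) else -1 with hVdef
  have hX : Measurable X := (hmeas i).const_mul _
  have hY : Measurable Y := (hmeas j).const_mul _
  have hV : Measurable V :=
    measurable_dsup' s.attach (fun k ω => β k * u k ω) (fun k => (hmeas k).const_mul _)
  have hXnn : ∀ ω, 0 ≤ X ω := fun ω => mul_nonneg (hβ i).le (hrange i ω).1
  have hVle : ∀ (ω) (x : ℝ), 0 ≤ x → (V ω ≤ x ↔ ∀ k ∈ s, β k * u k ω ≤ x) := by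
    intro ω x hx
    by_cases h : s.attach.Nonempty
    · rw [hVdef]
      simp only [dif_pos h, Finset.sup'_le_iff]
      constructor
      · intro hh k hk
        exact hh ⟨k, hk⟩ (Finset.mem_attach _ _)
      · intro hh b _
        exact hh b b.2
    · rw [hVdef]
      simp only [dif_neg h]
      rw [Finset.attach_nonempty_iff, Finset.not_nonempty_iff_eq_empty] at h
      simp [h]
      linarith
  have hAset : {ω | β i * u i ω = ⨆ k, β k * u k ω} = {ω | Y ω ≤ X ω ∧ V ω ≤ X ω} := by
    ext ω
    simp only [Set.mem_setOf_eq]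
    have hbdd : BddAbove (Set.range fun k => β k * u k ω) := (Set.finite_range _).bddAbove
    constructor
    · intro h
      have hall : ∀ k, β k * u k ω ≤ X ω := by
        intro k
        calc β k * u k ω ≤ ⨆ k, β k * u k ω := le_ciSup hbdd k
          _ = X ω := h.symm
      exact ⟨hall j, (hVle ω (X ω) (hXnn ω)).2 (fun k _ => hall k)⟩
    · rintro ⟨h1, h2⟩
      have hall : ∀ k, β k * u k ω ≤ β i * u i ω := by
        intro k
        by_cases hki : k = i
        · subst hki; exact le_rfl
        by_cases hkj : k = j
        · subst hkj; exact h1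
        · exact (hVle ω _ (hXnn ω)).1 h2 k ((hmem_s k).2 ⟨hkj, hki⟩)
      exact le_antisymm (le_ciSup hbdd i) (ciSup_le hall)
  -- independence
  set T : Finset (Fin n) := {i}ᶜ with hT
  have hjT : j ∈ T := by
    rw [hT, Finset.mem_compl, Finset.mem_singleton]
    exact Ne.symm hij
  have hsub : ∀ {k : Fin n}, k ∈ s → k ∈ T := by
    intro k hk
    rw [hT, Finset.mem_compl, Finset.mem_singleton]
    exact ((hmem_s k).1 hk).2
  have hXW : IndepFun X (fun ω => (Y ω, V ω)) μ := by
    have h0 := hindep.indepFun_finset {i} T (by simp [hT]) hmeas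
    have hφ1 : Measurable (fun gg : (({i} : Finset (Fin n)) → ℝ) =>
        β i * gg ⟨i, Finset.mem_singleton_self i⟩) :=
      (measurable_pi_apply _).const_mul _
    have hψY : Measurable (fun gg : (T → ℝ) => β j * gg ⟨j, hjT⟩) :=
      (measurable_pi_apply _).const_mul _
    have hψV : Measurable (fun gg : (T → ℝ) =>
        if h : s.attach.Nonempty then
          s.attach.sup' h (fun k => β k * gg ⟨k, hsub k.2⟩) else -1) :=
      measurable_dsup' s.attach _ (fun k => (measurable_pi_apply _).const_mul _)
    exact h0.comp hφ1 (hψY.prodMk hψV)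
  have hYV : IndepFun Y V μ := by
    have hdisj : Disjoint ({j} : Finset (Fin n)) s := by
      rw [Finset.disjoint_singleton_left]
      intro hjs
      exact ((hmem_s j).1 hjs).1 rfl
    have h0 := hindep.indepFun_finset {j} s hdisj hmeas
    have hφJ : Measurable (fun gg : (({j} : Finset (Fin n)) → ℝ) =>
        β j * gg ⟨j, Finset.mem_singleton_self j⟩) :=
      (measurable_pi_apply _).const_mul _
    have hψV2 : Measurable (fun gg : ({x // x ∈ s} → ℝ) =>
        if h : s.attach.Nonempty then
          s.attach.sup' h (fun k => β k * gg k) else -1) :=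
      measurable_dsup' s.attach _ (fun k => (measurable_pi_apply _).const_mul _)
    exact h0.comp hφJ hψV2
  -- measure-side functions
  set mX := μ.map X with hmX
  haveI : IsProbabilityMeasure mX := Measure.isProbabilityMeasure_map hX.aemeasurable
  set φ : ℝ → ℝ := fun x => (μ {ω | Y ω ≤ x}).toReal with hφdef
  set Φ : ℝ → ℝ := fun x => (μ {ω | V ω ≤ x}).toReal with hΦdef
  have hφmono : Monotone φ := by
    intro a b hab
    exact ENNReal.toReal_mono (measure_ne_top μ _)
      (measure_mono (fun ω h => le_trans h hab))
  have hΦmono : Monotone Φ := by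
    intro a b hab
    exact ENNReal.toReal_mono (measure_ne_top μ _)
      (measure_mono (fun ω h => le_trans h hab))
  have htoReal_le_one : ∀ S : Set Ω, (μ S).toReal ≤ 1 := by
    intro S
    have := ENNReal.toReal_mono (measure_ne_top μ Set.univ) (measure_mono (Set.subset_univ S))
    simpa using this
  have hφ01 : ∀ x, 0 ≤ φ x ∧ φ x ≤ 1 := fun x => ⟨ENNReal.toReal_nonneg, htoReal_le_one _⟩
  have hΦ01 : ∀ x, 0 ≤ Φ x ∧ Φ x ≤ 1 := fun x => ⟨ENNReal.toReal_nonneg, htoReal_le_one _⟩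
  have hφb : ∀ x, |φ x| ≤ 1 := fun x => abs_le.2 ⟨by linarith [(hφ01 x).1], (hφ01 x).2⟩
  have hΦb : ∀ x, |Φ x| ≤ 1 := fun x => abs_le.2 ⟨by linarith [(hΦ01 x).1], (hΦ01 x).2⟩
  have hΨ : ∀ x : ℝ, μ {ω | Y ω ≤ x ∧ V ω ≤ x} = μ {ω | Y ω ≤ x} * μ {ω | V ω ≤ x} := by
    intro x
    have h := hYV.measure_inter_preimage_eq_mul (Set.Iic x) (Set.Iic x)
      measurableSet_Iic measurableSet_Iic
    have he : Y ⁻¹' Set.Iic x ∩ V ⁻¹' Set.Iic x = {ω | Y ω ≤ x ∧ V ω ≤ x} := by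
      ext ω
      simp only [Set.mem_inter_iff, Set.mem_preimage, Set.mem_Iic, Set.mem_setOf_eq]
    rw [he] at h
    exact h
  -- key factorization
  set W : Ω → ℝ × ℝ := fun ω => (Y ω, V ω) with hWdef
  have hW : Measurable W := hY.prodMk hV
  have hS1 : ∀ x : ℝ, MeasurableSet {w : ℝ × ℝ | w.1 ≤ x ∧ w.2 ≤ x} := by
    intro x
    exact (measurableSet_le measurable_fst measurable_const).inter
      (measurableSet_le measurable_snd measurable_const)
  have hS1' : ∀ x : ℝ, MeasurableSet {w : ℝ × ℝ | w.1 ≤ x} := by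
    intro x
    exact measurableSet_le measurable_fst measurable_const
  have hmapW : ∀ x : ℝ, (μ.map W) {w : ℝ × ℝ | w.1 ≤ x ∧ w.2 ≤ x}
      = μ {ω | Y ω ≤ x ∧ V ω ≤ x} := by
    intro x
    rw [Measure.map_apply hW (hS1 x)]
    rfl
  have hmapW' : ∀ x : ℝ, (μ.map W) {w : ℝ × ℝ | w.1 ≤ x} = μ {ω | Y ω ≤ x} := by
    intro x
    rw [Measure.map_apply hW (hS1' x)]
    rfl
  have keyfact1 : ∀ (f : ℝ → ℝ), Measurable f → (∀ x, |f x| ≤ 1) →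
      ∫ ω, f (X ω) * (if Y ω ≤ X ω ∧ V ω ≤ X ω then (1:ℝ) else 0) ∂μ
        = ∫ x, f x * (φ x * Φ x) ∂mX := by
    intro f hfm hfb
    have hSmeas : MeasurableSet {p : ℝ × (ℝ × ℝ) | p.2.1 ≤ p.1 ∧ p.2.2 ≤ p.1} :=
      (measurableSet_le (measurable_fst.comp measurable_snd) measurable_fst).inter
        (measurableSet_le (measurable_snd.comp measurable_snd) measurable_fst)
    have hFm : Measurable (fun p : ℝ × (ℝ × ℝ) =>
        f p.1 * (if p.2.1 ≤ p.1 ∧ p.2.2 ≤ p.1 then (1:ℝ) else 0)) :=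
      (hfm.comp measurable_fst).mul (Measurable.ite hSmeas measurable_const measurable_const)
    have hFb : ∀ p : ℝ × (ℝ × ℝ),
        |f p.1 * (if p.2.1 ≤ p.1 ∧ p.2.2 ≤ p.1 then (1:ℝ) else 0)| ≤ 1 := by
      intro p
      rw [abs_mul]
      split_ifs
      · simpa using hfb _
      · simpa using zero_le_one
    have h := indep_int μ hX hW hXW
      (fun p : ℝ × (ℝ × ℝ) => f p.1 * (if p.2.1 ≤ p.1 ∧ p.2.2 ≤ p.1 then (1:ℝ) else 0))
      hFm (C := 1) hFb
    rw [hmX]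
    rw [show (∫ ω, f (X ω) * (if Y ω ≤ X ω ∧ V ω ≤ X ω then (1:ℝ) else 0) ∂μ)
      = ∫ ω, (fun p : ℝ × (ℝ × ℝ) =>
          f p.1 * (if p.2.1 ≤ p.1 ∧ p.2.2 ≤ p.1 then (1:ℝ) else 0)) (X ω, W ω) ∂μ from rfl, h]
    refine integral_congr_ae (Filter.Eventually.of_forall fun x => ?_)
    simp only
    rw [integral_const_mul]
    congr 1
    have hind : (fun w : ℝ × ℝ => if w.1 ≤ x ∧ w.2 ≤ x then (1:ℝ) else 0)
        = Set.indicator {w : ℝ × ℝ | w.1 ≤ x ∧ w.2 ≤ x} (fun _ => (1:ℝ)) := by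
      funext w; simp [Set.indicator_apply, Set.mem_setOf_eq]
    rw [hind, integral_indicator_const (1:ℝ) (hS1 x), Measure.real, hmapW x, hΨ x,
      ENNReal.toReal_mul]
    simp [hφdef, hΦdef]
  have keyfact2 : ∀ (f : ℝ → ℝ), Measurable f → (∀ x, |f x| ≤ 1) →
      ∫ ω, f (X ω) * (if Y ω ≤ X ω then (1:ℝ) else 0) ∂μ
        = ∫ x, f x * φ x ∂mX := by
    intro f hfm hfb
    have hSmeas : MeasurableSet {p : ℝ × (ℝ × ℝ) | p.2.1 ≤ p.1} :=
      measurableSet_le (measurable_fst.comp measurable_snd) measurable_fst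
    have hFm : Measurable (fun p : ℝ × (ℝ × ℝ) =>
        f p.1 * (if p.2.1 ≤ p.1 then (1:ℝ) else 0)) :=
      (hfm.comp measurable_fst).mul (Measurable.ite hSmeas measurable_const measurable_const)
    have hFb : ∀ p : ℝ × (ℝ × ℝ), |f p.1 * (if p.2.1 ≤ p.1 then (1:ℝ) else 0)| ≤ 1 := by
      intro p
      rw [abs_mul]
      split_ifs
      · simpa using hfb _
      · simpa using zero_le_one
    have h := indep_int μ hX hW hXW
      (fun p : ℝ × (ℝ × ℝ) => f p.1 * (if p.2.1 ≤ p.1 then (1:ℝ) else 0))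
      hFm (C := 1) hFb
    rw [hmX]
    rw [show (∫ ω, f (X ω) * (if Y ω ≤ X ω then (1:ℝ) else 0) ∂μ)
      = ∫ ω, (fun p : ℝ × (ℝ × ℝ) =>
          f p.1 * (if p.2.1 ≤ p.1 then (1:ℝ) else 0)) (X ω, W ω) ∂μ from rfl, h]
    refine integral_congr_ae (Filter.Eventually.of_forall fun x => ?_)
    simp only
    rw [integral_const_mul]
    congr 1
    have hind : (fun w : ℝ × ℝ => if w.1 ≤ x then (1:ℝ) else 0)
        = Set.indicator {w : ℝ × ℝ | w.1 ≤ x} (fun _ => (1:ℝ)) := by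
      funext w; simp [Set.indicator_apply, Set.mem_setOf_eq]
    rw [hind, integral_indicator_const (1:ℝ) (hS1' x), Measure.real, hmapW' x]
    simp [hφdef]
  -- the clamp function
  set f₀ : ℝ → ℝ := fun x => max 0 (min (x / β i) 1) with hf₀def
  have hf₀mono : Monotone f₀ := by
    intro a b hab
    simp only [hf₀def]
    gcongr
    exact (hβ i).le
  have hf₀01 : ∀ x, 0 ≤ f₀ x ∧ f₀ x ≤ 1 := fun x =>
    ⟨le_max_left _ _, max_le zero_le_one (min_le_right _ _)⟩
  have hf₀b : ∀ x, |f₀ x| ≤ 1 := fun x => abs_le.2 ⟨by linarith [(hf₀01 x).1], (hf₀01 x).2⟩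
  have hf₀m : Measurable f₀ := hf₀mono.measurable
  have hf₀X : ∀ ω, f₀ (X ω) = u i ω := by
    intro ω
    have h1 := (hrange i ω).1
    have h2 := (hrange i ω).2
    simp only [hf₀def, hXdef]
    rw [mul_div_cancel_left₀ _ (hβ i).ne']
    rw [min_eq_left h2, max_eq_right h1]
  have hAm : MeasurableSet {ω | Y ω ≤ X ω ∧ V ω ≤ X ω} :=
    (measurableSet_le hY hX).inter (measurableSet_le hV hX)
  have hBm : MeasurableSet {ω | Y ω ≤ X ω} := measurableSet_le hY hX
  have hIA : ∫ ω in {ω | Y ω ≤ X ω ∧ V ω ≤ X ω}, u i ω ∂μ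
      = ∫ x, f₀ x * (φ x * Φ x) ∂mX := by
    rw [← keyfact1 f₀ hf₀m hf₀b, ← integral_indicator hAm]
    refine integral_congr_ae (Filter.Eventually.of_forall fun ω => ?_)
    by_cases h : (Y ω ≤ X ω ∧ V ω ≤ X ω)
    · simp [Set.indicator_apply, Set.mem_setOf_eq, h, hf₀X ω]
    · simp [Set.indicator_apply, Set.mem_setOf_eq, h]
  have hIB : ∫ ω in {ω | Y ω ≤ X ω}, u i ω ∂μ = ∫ x, f₀ x * φ x ∂mX := by
    rw [← keyfact2 f₀ hf₀m hf₀b, ← integral_indicator hBm]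
    refine integral_congr_ae (Filter.Eventually.of_forall fun ω => ?_)
    by_cases h : Y ω ≤ X ω
    · simp [Set.indicator_apply, Set.mem_setOf_eq, h, hf₀X ω]
    · simp [Set.indicator_apply, Set.mem_setOf_eq, h]
  have hμA : (μ {ω | Y ω ≤ X ω ∧ V ω ≤ X ω}).toReal = ∫ x, φ x * Φ x ∂mX := by
    have h1 := keyfact1 (fun _ => (1:ℝ)) measurable_const (fun x => by norm_num)
    simp only [one_mul] at h1
    rw [← h1]
    have hi : (fun ω => if Y ω ≤ X ω ∧ V ω ≤ X ω then (1:ℝ) else 0)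
        = Set.indicator {ω | Y ω ≤ X ω ∧ V ω ≤ X ω} (fun _ => (1:ℝ)) := by
      funext ω
      by_cases h : (Y ω ≤ X ω ∧ V ω ≤ X ω) <;> simp [Set.indicator_apply, Set.mem_setOf_eq, h]
    rw [hi, integral_indicator_const (1:ℝ) hAm, smul_eq_mul, mul_one]
    rfl
  have hμB : (μ {ω | Y ω ≤ X ω}).toReal = ∫ x, φ x ∂mX := by
    have h1 := keyfact2 (fun _ => (1:ℝ)) measurable_const (fun x => by norm_num)
    simp only [one_mul] at h1
    rw [← h1]
    have hi : (fun ω => if Y ω ≤ X ω then (1:ℝ) else 0)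
        = Set.indicator {ω | Y ω ≤ X ω} (fun _ => (1:ℝ)) := by
      funext ω
      by_cases h : Y ω ≤ X ω <;> simp [Set.indicator_apply, Set.mem_setOf_eq, h]
    rw [hi, integral_indicator_const (1:ℝ) hBm, smul_eq_mul, mul_one]
    rfl
  -- assemble
  have hBset : {ω | β j * u j ω ≤ β i * u i ω} = {ω | Y ω ≤ X ω} := rfl
  rw [hBset, hAset]
  simp only [condExpEvent]
  rw [hIA, hIB, hμA, hμB]
  have hr1 : (fun x => f₀ x * (φ x * Φ x)) = fun x => f₀ x * Φ x * φ x := by funext x; ring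
  have hr2 : (fun x => φ x * Φ x) = fun x => Φ x * φ x := by funext x; ring
  rw [hr1, hr2]
  have ha0 : 0 < ∫ x, Φ x * φ x ∂mX := by
    rw [← hr2, ← hμA, ← hAset]
    exact ENNReal.toReal_pos hpos1.ne' (measure_ne_top μ _)
  have hb0 : 0 < ∫ x, φ x ∂mX := by
    rw [← hμB]
    exact ENNReal.toReal_pos hpos2.ne' (measure_ne_top μ _)
  have hcheb := cheb mX f₀ Φ φ hf₀mono hΦmono hφmono.measurable
    (fun x => (hφ01 x).1) hf₀b hΦb hφb
  rw [inv_mul_eq_div, inv_mul_eq_div, div_le_div_iff₀ hb0 ha0]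
  exact hcheb
end
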